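/- arXiv:1706.03570 — 12 statements merged into one kernel-verified Lean document; each statement's English description precedes it below -/
import Mathlib

section
/- Let a, b be points of the open unit disk D of the complex plane and let L > 0 be such that |a − b| ≤ L · min(1 − |a|, 1 − |b|). Then the pseudo-hyperbolic distance satisfies ρ(a, b) ≤ L/√(L² + 1); in particular ρ(a, b) < 1. -/
/-- If `a, b` are in the open unit disk and
`|a - b| ≤ L * min (1 - |a|) (1 - |b|)` with `L > 0`, then the pseudo-hyperbolic
distance `ρ(a,b) = |(a - b)/(1 - conj a * b)|` satisfies
`ρ(a,b) ≤ L / √(L² + 1)`; in particular `ρ(a,b) < 1`. -/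
theorem pseudo_hyperbolic_distance_bound (a b : ℂ)
    (ha : ‖a‖ < 1) (hb : ‖b‖ < 1)
    (L : ℝ) (hL : 0 < L)
    (h : ‖a - b‖ ≤ L * min (1 - ‖a‖) (1 - ‖b‖)) :
    ‖(a - b) / (1 - (starRingEnd ℂ) a * b)‖ ≤ L / Real.sqrt (L ^ 2 + 1) ∧
      ‖(a - b) / (1 - (starRingEnd ℂ) a * b)‖ < 1 := by
  set d := ‖a - b‖ with hd
  set m := min (1 - ‖a‖) (1 - ‖b‖) with hmdef
  have hd0 : 0 ≤ d := norm_nonneg _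
  have hm0 : 0 < m := lt_min (by linarith) (by linarith)
  have ha0 : 0 ≤ ‖a‖ := norm_nonneg a
  have hb0 : 0 ≤ ‖b‖ := norm_nonneg b
  -- key identity
  have key : ‖1 - (starRingEnd ℂ) a * b‖ ^ 2
      = d ^ 2 + (1 - ‖a‖ ^ 2) * (1 - ‖b‖ ^ 2) := by
    rw [hd, Complex.sq_norm, Complex.sq_norm, Complex.sq_norm, Complex.sq_norm]
    simp only [Complex.normSq_apply, Complex.sub_re, Complex.sub_im, Complex.mul_re,
      Complex.mul_im, Complex.one_re, Complex.one_im, Complex.conj_re, Complex.conj_im]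
    ring
  have hP : m ^ 2 ≤ (1 - ‖a‖ ^ 2) * (1 - ‖b‖ ^ 2) := by
    have h1 : m ≤ 1 - ‖a‖ ^ 2 := by
      have := min_le_left (1 - ‖a‖) (1 - ‖b‖)
      nlinarith
    have h2 : m ≤ 1 - ‖b‖ ^ 2 := by
      have := min_le_right (1 - ‖a‖) (1 - ‖b‖)
      nlinarith
    nlinarith
  have hDpos : 0 < ‖1 - (starRingEnd ℂ) a * b‖ := by
    have h2 : 0 < ‖1 - (starRingEnd ℂ) a * b‖ ^ 2 := by nlinarith
    nlinarith [norm_nonneg (1 - (starRingEnd ℂ) a * b)]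
  have hsq : 0 < Real.sqrt (L ^ 2 + 1) := Real.sqrt_pos.mpr (by positivity)
  have hsq2 : Real.sqrt (L ^ 2 + 1) ^ 2 = L ^ 2 + 1 := Real.sq_sqrt (by positivity)
  have hdLm : d ≤ L * m := h
  have main : d / ‖1 - (starRingEnd ℂ) a * b‖ ≤ L / Real.sqrt (L ^ 2 + 1) := by
    rw [div_le_div_iff₀ hDpos hsq]
    have hA : 0 ≤ d * Real.sqrt (L ^ 2 + 1) := by positivity
    have hB : 0 ≤ L * ‖1 - (starRingEnd ℂ) a * b‖ := by positivity
    have hsqcmp : (d * Real.sqrt (L ^ 2 + 1)) ^ 2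
        ≤ (L * ‖1 - (starRingEnd ℂ) a * b‖) ^ 2 := by
      have e1 : (d * Real.sqrt (L ^ 2 + 1)) ^ 2 = d ^ 2 * (L ^ 2 + 1) := by
        rw [mul_pow, hsq2]
      have e2 : (L * ‖1 - (starRingEnd ℂ) a * b‖) ^ 2
          = L ^ 2 * (d ^ 2 + (1 - ‖a‖ ^ 2) * (1 - ‖b‖ ^ 2)) := by
        rw [mul_pow, key]
      rw [e1, e2]
      nlinarith [sq_nonneg d, sq_nonneg m]
    calc d * Real.sqrt (L ^ 2 + 1)
        = Real.sqrt ((d * Real.sqrt (L ^ 2 + 1)) ^ 2) := (Real.sqrt_sq hA).symm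
      _ ≤ Real.sqrt ((L * ‖1 - (starRingEnd ℂ) a * b‖) ^ 2) :=
          Real.sqrt_le_sqrt hsqcmp
      _ = L * ‖1 - (starRingEnd ℂ) a * b‖ := Real.sqrt_sq hB
  have habs : ‖(a - b) / (1 - (starRingEnd ℂ) a * b)‖
      = d / ‖1 - (starRingEnd ℂ) a * b‖ := by
    rw [norm_div]
  have hlt1 : L / Real.sqrt (L ^ 2 + 1) < 1 := by
    rw [div_lt_one hsq]
    nlinarith [hsq, hsq2]
  refine ⟨?_, ?_⟩
  · rw [habs]; exact main
  · rw [habs]; exact lt_of_le_of_lt main hlt1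
end

section
/- Let θ ∈ (0, 1) and set δ = cos(θπ/2). For every complex number z with |z| ≤ 1 and Re z ≥ 0, one has 1 − |λ_θ(z)|² ≥ (δ/2) · |1 − z|^θ. -/
private lemma aux_final (P Q N c d : ℝ) (hd : 0 ≤ d) (hQ : 0 ≤ Q) (hP : 0 ≤ P)
    (hNle : N ≤ 8 * P) (hc : d ≤ c) : d / 2 * Q * N ≤ 4 * (P * Q * c) := by
  calc d / 2 * Q * N ≤ d / 2 * Q * (8 * P) :=
        mul_le_mul_of_nonneg_left hNle (mul_nonneg (by linarith) hQ)
    _ = 4 * (P * Q * d) := by ring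
    _ ≤ 4 * (P * Q * c) := by nlinarith [mul_nonneg hP hQ]

private lemma aux_sq (P x : ℝ) (hx : 0 ≤ x) (hP : 0 < P) (hP2 : P ≤ 2)
    (h : x ≤ 2 * P) : x ^ 2 ≤ 8 * P := by nlinarith

/-- The lens map `λ_θ`, defined using principal branches of complex powers. -/
noncomputable def lensMap (θ : ℝ) (z : ℂ) : ℂ :=
  ((1 + z) ^ (θ : ℂ) - (1 - z) ^ (θ : ℂ)) / ((1 + z) ^ (θ : ℂ) + (1 - z) ^ (θ : ℂ))

/-- For `θ ∈ (0,1)`, `δ = cos(θπ/2)`, and `z` with `|z| ≤ 1`, `Re z ≥ 0`: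
`1 - |λ_θ(z)|² ≥ (δ/2) |1 - z|^θ`. -/
theorem one_sub_sq_abs_lensMap_ge (θ : ℝ) (hθ : θ ∈ Set.Ioo (0 : ℝ) 1)
    (δ : ℝ) (hδ : δ = Real.cos (θ * Real.pi / 2))
    (z : ℂ) (hz : ‖z‖ ≤ 1) (hre : 0 ≤ z.re) :
    1 - ‖lensMap θ z‖ ^ 2 ≥ δ / 2 * ‖1 - z‖ ^ θ := by
  obtain ⟨hθ0, hθ1⟩ := hθ
  have hπ := Real.pi_pos
  have hδ0 : 0 ≤ δ := by
    rw [hδ]; apply Real.cos_nonneg_of_mem_Icc; constructor <;> nlinarith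
  have hre1 : z.re ≤ 1 := le_trans (Complex.re_le_norm z) hz
  by_cases hz1 : z = 1
  · subst hz1
    have h2 : ((1:ℂ) + 1) ≠ 0 := by norm_num
    have ha : ((1:ℂ) + 1) ^ (θ:ℂ) ≠ 0 := by
      rw [Complex.cpow_def_of_ne_zero h2]; exact Complex.exp_ne_zero _
    have hθc : (θ:ℂ) ≠ 0 := by exact_mod_cast Complex.ofReal_ne_zero.mpr hθ0.ne'
    simp only [lensMap, sub_self, Complex.zero_cpow hθc, sub_zero, add_zero,
      div_self ha, norm_one, norm_zero, one_pow]
    rw [Real.zero_rpow hθ0.ne']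
    simp
  -- main case z ≠ 1
  have h1 : (1 : ℂ) + z ≠ 0 := by
    intro h
    have : ((1:ℂ) + z).re = 0 := by rw [h]; simp
    simp only [Complex.add_re, Complex.one_re] at this
    linarith
  have h2 : (1 : ℂ) - z ≠ 0 := sub_ne_zero.mpr fun h => hz1 h.symm
  set r₁ := ‖1 + z‖ with hr₁def
  set r₂ := ‖1 - z‖ with hr₂def
  have hr₁pos : 0 < r₁ := norm_pos_iff.mpr h1
  have hr₂pos : 0 < r₂ := norm_pos_iff.mpr h2
  set φ₁ := Complex.arg (1 + z) with hφ₁def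
  set φ₂ := Complex.arg (1 - z) with hφ₂def
  have hre1' : ((1:ℂ) - z).re = 1 - z.re := by simp
  have hre2' : ((1:ℂ) + z).re = 1 + z.re := by simp
  have hφ₁ : |φ₁| ≤ Real.pi / 2 := Complex.abs_arg_le_pi_div_two_iff.mpr (by rw [hre2']; linarith)
  have hφ₂ : |φ₂| ≤ Real.pi / 2 := Complex.abs_arg_le_pi_div_two_iff.mpr (by rw [hre1']; linarith)
  have hzsq : z.re ^ 2 + z.im ^ 2 ≤ 1 := by
    have h := Complex.sq_norm z
    have h2 : ‖z‖ ^ 2 ≤ 1 := by nlinarith [norm_nonneg z]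
    rw [h, Complex.normSq_apply] at h2
    nlinarith
  -- cos (φ₁ - φ₂) ≥ 0
  have hcosφ : 0 ≤ Real.cos (φ₁ - φ₂) := by
    rw [Real.cos_sub, hφ₁def, hφ₂def, Complex.cos_arg h1, Complex.cos_arg h2,
      Complex.sin_arg, Complex.sin_arg]
    have heq : ((1:ℂ)+z).re / r₁ * (((1:ℂ)-z).re / r₂) + ((1:ℂ)+z).im / r₁ * (((1:ℂ)-z).im / r₂)
        = (1 - (z.re^2 + z.im^2)) / (r₁ * r₂) := by
      simp only [Complex.add_re, Complex.sub_re, Complex.add_im, Complex.sub_im,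
        Complex.one_re, Complex.one_im]
      field_simp
      ring
    rw [heq]
    apply div_nonneg (by nlinarith) (by positivity)
  -- |φ₁ - φ₂| ≤ π/2
  have hφ : |φ₁ - φ₂| ≤ Real.pi / 2 := by
    by_contra h
    push_neg at h
    have habs : |φ₁ - φ₂| ≤ Real.pi := le_trans (abs_sub _ _) (by linarith)
    have : Real.cos |φ₁ - φ₂| < 0 :=
      Real.cos_neg_of_pi_div_two_lt_of_lt h (by linarith)
    rw [Real.cos_abs] at this
    linarith
  -- cos (θ (φ₁ - φ₂)) ≥ δ
  have hcosθφ : δ ≤ Real.cos ((φ₁ - φ₂) * θ) := by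
    have habs : |(φ₁ - φ₂) * θ| ≤ θ * Real.pi / 2 := by
      rw [abs_mul, abs_of_pos hθ0]
      calc |φ₁ - φ₂| * θ ≤ (Real.pi / 2) * θ := by nlinarith
        _ = θ * Real.pi / 2 := by ring
    calc δ = Real.cos (θ * Real.pi / 2) := hδ
      _ ≤ Real.cos |(φ₁ - φ₂) * θ| :=
          Real.cos_le_cos_of_nonneg_of_le_pi (abs_nonneg _) (by nlinarith) habs
      _ = Real.cos ((φ₁ - φ₂) * θ) := Real.cos_abs _
  set a := Complex.exp (Complex.log (1 + z) * θ) with hadef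
  set b := Complex.exp (Complex.log (1 - z) * θ) with hbdef
  have hlens : lensMap θ z = (a - b) / (a + b) := by
    rw [lensMap, Complex.cpow_def_of_ne_zero h1, Complex.cpow_def_of_ne_zero h2]
  have habs_a : ‖a‖ = r₁ ^ θ := by
    rw [hadef, Complex.norm_exp, Real.rpow_def_of_pos hr₁pos]
    congr 1
    simp [Complex.mul_re, Complex.log_re]
    exact Or.inl rfl
  have habs_b : ‖b‖ = r₂ ^ θ := by
    rw [hbdef, Complex.norm_exp, Real.rpow_def_of_pos hr₂pos]
    congr 1
    simp [Complex.mul_re, Complex.log_re]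
    exact Or.inl rfl
  -- Re(a * conj b)
  have hmul : a * (starRingEnd ℂ) b = Complex.exp
      (Complex.log (1 + z) * θ + (starRingEnd ℂ) (Complex.log (1 - z)) * θ) := by
    rw [hadef, hbdef, ← Complex.exp_conj, ← Complex.exp_add]
    congr 1
    rw [map_mul, Complex.conj_ofReal]
  have hre_ab : (a * (starRingEnd ℂ) b).re = r₁ ^ θ * r₂ ^ θ * Real.cos ((φ₁ - φ₂) * θ) := by
    rw [hmul, Complex.exp_re]
    have hre' : (Complex.log (1 + z) * θ + (starRingEnd ℂ) (Complex.log (1 - z)) * θ).re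
        = (Real.log r₁ + Real.log r₂) * θ := by
      simp [Complex.add_re, Complex.mul_re, Complex.log_re, Complex.conj_re]
      ring
    have him' : (Complex.log (1 + z) * θ + (starRingEnd ℂ) (Complex.log (1 - z)) * θ).im
        = (φ₁ - φ₂) * θ := by
      simp [Complex.add_im, Complex.mul_im, Complex.log_im, Complex.conj_im, Complex.log_re]
      ring
    rw [hre', him', Real.rpow_def_of_pos hr₁pos, Real.rpow_def_of_pos hr₂pos, ← Real.exp_add]
    ring_nf
  -- positivity of real parts
  have hcospos : ∀ φ : ℝ, |φ| ≤ Real.pi / 2 → 0 < Real.cos (φ * θ) := by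
    intro φ hφle
    apply Real.cos_pos_of_mem_Ioo
    have habs : |φ * θ| < Real.pi / 2 := by
      rw [abs_mul, abs_of_pos hθ0]
      calc |φ| * θ ≤ Real.pi / 2 * θ := mul_le_mul_of_nonneg_right hφle hθ0.le
        _ < Real.pi / 2 * 1 := by
            apply mul_lt_mul_of_pos_left hθ1; positivity
        _ = Real.pi / 2 := mul_one _
    obtain ⟨hl, hr⟩ := abs_lt.mp habs
    exact ⟨hl, hr⟩
  have hima : (Complex.log (1 + z) * θ).im = φ₁ * θ := by
    simp [Complex.mul_im, Complex.log_im]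
    exact Or.inl rfl
  have himb : (Complex.log (1 - z) * θ).im = φ₂ * θ := by
    simp [Complex.mul_im, Complex.log_im]
    exact Or.inl rfl
  have hrea : 0 < a.re := by
    rw [hadef, Complex.exp_re, hima]
    exact mul_pos (Real.exp_pos _) (hcospos φ₁ hφ₁)
  have hreb : 0 < b.re := by
    rw [hbdef, Complex.exp_re, himb]
    exact mul_pos (Real.exp_pos _) (hcospos φ₂ hφ₂)
  have hab : a + b ≠ 0 := by
    intro h
    have : (a + b).re = 0 := by rw [h]; simp
    rw [Complex.add_re] at this
    linarith
  set N := Complex.normSq (a + b) with hNdef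
  have hN : 0 < N := Complex.normSq_pos.mpr hab
  have hform : 1 - ‖(a - b) / (a + b)‖ ^ 2 = 4 * (a * (starRingEnd ℂ) b).re / N := by
    have hM : ‖(a - b) / (a + b)‖ ^ 2 = Complex.normSq (a - b) / N := by
      rw [norm_div, div_pow, Complex.sq_norm, Complex.sq_norm]
    have hdiff : N - Complex.normSq (a - b) = 4 * (a * (starRingEnd ℂ) b).re := by
      rw [hNdef, Complex.normSq_add, Complex.normSq_sub]; ring
    rw [hM, one_sub_div hN.ne', hdiff]
  -- size bounds
  have hr12 : r₂ ≤ r₁ := by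
    have h1' : Complex.normSq (1 - z) ≤ Complex.normSq (1 + z) := by
      simp only [Complex.normSq_apply, Complex.sub_re, Complex.sub_im, Complex.add_re,
        Complex.add_im, Complex.one_re, Complex.one_im]
      ring_nf
      linarith
    rw [hr₁def, hr₂def, Complex.norm_def, Complex.norm_def]
    exact Real.sqrt_le_sqrt h1'
  have hQP : r₂ ^ θ ≤ r₁ ^ θ := Real.rpow_le_rpow hr₂pos.le hr12 hθ0.le
  have hP2 : r₁ ^ θ ≤ 2 := by
    have hr1le : r₁ ≤ 2 := by
      calc r₁ ≤ ‖(1:ℂ)‖ + ‖z‖ := norm_add_le 1 z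
        _ ≤ 2 := by rw [norm_one]; linarith
    calc r₁ ^ θ ≤ (2:ℝ) ^ θ := Real.rpow_le_rpow hr₁pos.le hr1le hθ0.le
      _ ≤ (2:ℝ) ^ (1:ℝ) := Real.rpow_le_rpow_of_exponent_le one_le_two hθ1.le
      _ = 2 := Real.rpow_one 2
  have hPpos : 0 < r₁ ^ θ := Real.rpow_pos_of_pos hr₁pos θ
  have hQpos : 0 < r₂ ^ θ := Real.rpow_pos_of_pos hr₂pos θ
  have hNle : N ≤ 8 * r₁ ^ θ := by
    have habssum : ‖a + b‖ ≤ r₁ ^ θ + r₂ ^ θ := by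
      calc ‖a + b‖ ≤ ‖a‖ + ‖b‖ := norm_add_le a b
        _ = r₁ ^ θ + r₂ ^ θ := by rw [habs_a, habs_b]
    have hNsq : N = ‖a + b‖ ^ 2 := (Complex.sq_norm _).symm
    rw [hNsq]
    exact aux_sq _ _ (norm_nonneg _) hPpos hP2 (by linarith)
  rw [hlens, hform, ge_iff_le, le_div_iff₀ hN]
  rw [hre_ab]
  exact aux_final _ _ _ _ _ hδ0 hQpos.le hPpos.le hNle hcosθφ
end

section
/- Let θ ∈ (0, 1) and set δ = cos(θπ/2). For every complex number z with |z| ≤ 1, one has Re((1 − z)^θ + (1 + z)^θ) ≥ δ · (|1 − z|^θ + |1 + z|^θ), and moreover |1 − z|^θ + |1 + z|^θ ≥ 1; consequently |(1 − z)^θ + (1 + z)^θ| ≥ δ. -/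
lemma re_cpow_aux (θ : ℝ) (hθ0 : 0 < θ) (hθ1 : θ < 1) (w : ℂ) (hw : 0 ≤ w.re) :
    (w ^ (θ : ℂ)).re ≥ Real.cos (θ * Real.pi / 2) * ‖w‖ ^ θ := by
  have hθne : (θ : ℂ) ≠ 0 := by exact_mod_cast hθ0.ne'
  rcases eq_or_ne w 0 with rfl | hw0
  · simp [Complex.zero_cpow hθne, Real.zero_rpow hθ0.ne']
  · have habs : 0 < ‖w‖ := norm_pos_iff.mpr hw0
    have hre : (w ^ (θ : ℂ)).re = ‖w‖ ^ θ * Real.cos (θ * Complex.arg w) := by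
      rw [Complex.cpow_def_of_ne_zero hw0, Complex.exp_re]
      have h1 : (Complex.log w * (θ : ℂ)).re = θ * Real.log (‖w‖) := by
        simp [Complex.log_re]; ring
      have h2 : (Complex.log w * (θ : ℂ)).im = θ * Complex.arg w := by
        simp [Complex.log_im]; ring
      rw [h1, h2, Real.rpow_def_of_pos habs, mul_comm θ (Real.log (‖w‖))]
    rw [hre]
    have harg : |Complex.arg w| ≤ Real.pi / 2 := Complex.abs_arg_le_pi_div_two_iff.mpr hw
    have hcos : Real.cos (θ * Real.pi / 2) ≤ Real.cos (θ * Complex.arg w) := by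
      rw [← Real.cos_abs (θ * Complex.arg w)]
      apply Real.cos_le_cos_of_nonneg_of_le_pi (abs_nonneg _)
      · nlinarith [Real.pi_pos]
      · rw [abs_mul, abs_of_pos hθ0]
        nlinarith [Real.pi_pos]
    nlinarith [Real.rpow_pos_of_pos habs θ]

/-- For `θ ∈ (0,1)`, `δ = cos(θπ/2)`, and `|z| ≤ 1`:
`Re((1-z)^θ + (1+z)^θ) ≥ δ (|1-z|^θ + |1+z|^θ)`, `|1-z|^θ + |1+z|^θ ≥ 1`,
and consequently `|(1-z)^θ + (1+z)^θ| ≥ δ`. -/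
theorem re_sum_cpow_ge (θ : ℝ) (hθ : θ ∈ Set.Ioo (0 : ℝ) 1)
    (δ : ℝ) (hδ : δ = Real.cos (θ * Real.pi / 2))
    (z : ℂ) (hz : ‖z‖ ≤ 1) :
    ((1 - z) ^ (θ : ℂ) + (1 + z) ^ (θ : ℂ)).re ≥
        δ * (‖1 - z‖ ^ θ + ‖1 + z‖ ^ θ) ∧
      ‖1 - z‖ ^ θ + ‖1 + z‖ ^ θ ≥ 1 ∧
      ‖(1 - z) ^ (θ : ℂ) + (1 + z) ^ (θ : ℂ)‖ ≥ δ := by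
  obtain ⟨hθ0, hθ1⟩ := hθ
  have hzre : |z.re| ≤ 1 := le_trans (Complex.abs_re_le_norm z) hz
  have h1 : (0 : ℝ) ≤ (1 - z).re := by
    simp only [Complex.sub_re, Complex.one_re]
    cases abs_le.mp hzre; linarith
  have h2 : (0 : ℝ) ≤ (1 + z).re := by
    simp only [Complex.add_re, Complex.one_re]
    cases abs_le.mp hzre; linarith
  have key1 := re_cpow_aux θ hθ0 hθ1 (1 - z) h1
  have key2 := re_cpow_aux θ hθ0 hθ1 (1 + z) h2
  have hre : ((1 - z) ^ (θ : ℂ) + (1 + z) ^ (θ : ℂ)).re ≥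
      δ * (‖1 - z‖ ^ θ + ‖1 + z‖ ^ θ) := by
    rw [Complex.add_re, hδ]; ring_nf; ring_nf at key1 key2; linarith
  have hsum2 : (2 : ℝ) ≤ ‖1 - z‖ + ‖1 + z‖ := by
    have := norm_add_le (1 - z) (1 + z)
    simp only [sub_add_add_cancel] at this
    calc (2 : ℝ) = ‖(1 + 1 : ℂ)‖ := by norm_num
    _ ≤ _ := this
  have hS : ‖1 - z‖ ^ θ + ‖1 + z‖ ^ θ ≥ 1 := by
    rcases le_total 1 (‖1 - z‖) with h | h
    · have : (1 : ℝ) ≤ ‖1 - z‖ ^ θ := Real.one_le_rpow h hθ0.le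
      have : (0 : ℝ) ≤ ‖1 + z‖ ^ θ := Real.rpow_nonneg (norm_nonneg _) θ
      linarith [Real.one_le_rpow h hθ0.le]
    · have h' : (1 : ℝ) ≤ ‖1 + z‖ := by linarith
      have : (0 : ℝ) ≤ ‖1 - z‖ ^ θ := Real.rpow_nonneg (norm_nonneg _) θ
      linarith [Real.one_le_rpow h' hθ0.le]
  refine ⟨hre, hS, ?_⟩
  have hδ0 : 0 ≤ δ := by
    rw [hδ]
    apply Real.cos_nonneg_of_mem_Icc
    constructor <;> nlinarith [Real.pi_pos]
  calc δ = δ * 1 := (mul_one δ).symm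
  _ ≤ δ * (‖1 - z‖ ^ θ + ‖1 + z‖ ^ θ) := by
      exact mul_le_mul_of_nonneg_left hS hδ0
  _ ≤ ((1 - z) ^ (θ : ℂ) + (1 + z) ^ (θ : ℂ)).re := hre
  _ ≤ |((1 - z) ^ (θ : ℂ) + (1 + z) ^ (θ : ℂ)).re| := le_abs_self _
  _ ≤ ‖(1 - z) ^ (θ : ℂ) + (1 + z) ^ (θ : ℂ)‖ := Complex.abs_re_le_norm _
end

section
/- Let θ ∈ (0, 1), δ = cos(θπ/2), and define φ = (1 + λ_θ)/2. Then for every z in the open unit disk D, |1 − φ(z)| = (1/2)|1 − λ_θ(z)| ≤ |1 − z|^θ / δ. -/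
lemma re_cpow_ge (θ : ℝ) (hθ0 : 0 < θ) (hθ1 : θ ≤ 1) (w : ℂ) (hw : 0 < w.re) :
    Real.cos (θ * Real.pi / 2) * ‖w‖ ^ θ ≤ (w ^ (θ : ℂ)).re := by
  have hw0 : w ≠ 0 := by
    intro h; rw [h] at hw; simp at hw
  rw [Complex.cpow_def_of_ne_zero hw0]
  rw [Complex.exp_re]
  have him : (Complex.log w * (θ:ℂ)).im = Complex.arg w * θ := by
    simp [Complex.mul_im, Complex.log_im]
  have hre : (Complex.log w * (θ:ℂ)).re = Real.log (‖w‖) * θ := by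
    simp [Complex.mul_re, Complex.log_re]
  rw [him, hre]
  have habs : Real.exp (Real.log (‖w‖) * θ) = ‖w‖ ^ θ := by
    rw [Real.rpow_def_of_pos (norm_pos_iff.mpr hw0)]
  rw [habs, mul_comm (‖w‖ ^ θ)]
  have harg : |Complex.arg w| < Real.pi / 2 :=
    Complex.abs_arg_lt_pi_div_two_iff.2 (Or.inl hw)
  have hcos : Real.cos (θ * Real.pi / 2) ≤ Real.cos (Complex.arg w * θ) := by
    rw [← Real.cos_abs (Complex.arg w * θ)]
    apply Real.cos_le_cos_of_nonneg_of_le_pi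
    · positivity
    · nlinarith [Real.pi_pos, abs_nonneg (Complex.arg w)]
    · rw [abs_mul, abs_of_pos hθ0]
      nlinarith [abs_nonneg (Complex.arg w), Real.pi_pos]
  exact mul_le_mul_of_nonneg_right hcos (by positivity)

/-- For `θ ∈ (0,1)`, `δ = cos(θπ/2)` and `φ = (1 + λ_θ)/2`, one has, for
`z` in the open unit disk: `|1 - φ(z)| = (1/2)|1 - λ_θ(z)| ≤ |1 - z|^θ / δ`. -/
theorem abs_one_sub_phi (θ : ℝ) (hθ : θ ∈ Set.Ioo (0 : ℝ) 1)
    (δ : ℝ) (hδ : δ = Real.cos (θ * Real.pi / 2))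
    (φ : ℂ → ℂ) (hφ : ∀ z, φ z = (1 + lensMap θ z) / 2)
    (z : ℂ) (hz : ‖z‖ < 1) :
    ‖1 - φ z‖ = (1 / 2) * ‖1 - lensMap θ z‖ ∧
      ‖1 - φ z‖ ≤ ‖1 - z‖ ^ θ / δ := by
  obtain ⟨hθ0, hθ1⟩ := hθ
  have hδpos : 0 < δ := by
    rw [hδ]
    apply Real.cos_pos_of_mem_Ioo
    constructor <;> nlinarith [Real.pi_pos]
  set A := (1 + z) ^ (θ : ℂ) with hA
  set B := (1 - z) ^ (θ : ℂ) with hB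
  have hre1 : 0 < (1 + z).re := by
    have := abs_lt.1 (lt_of_le_of_lt (Complex.abs_re_le_norm z) hz)
    simp only [Complex.add_re, Complex.one_re]; linarith
  have hre2 : 0 < (1 - z).re := by
    have := abs_lt.1 (lt_of_le_of_lt (Complex.abs_re_le_norm z) hz)
    simp only [Complex.sub_re, Complex.one_re]; linarith
  have hArel : δ * ‖1 + z‖ ^ θ ≤ A.re := hδ ▸ re_cpow_ge θ hθ0 hθ1.le _ hre1
  have hBrel : δ * ‖1 - z‖ ^ θ ≤ B.re := hδ ▸ re_cpow_ge θ hθ0 hθ1.le _ hre2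
  -- |1+z|^θ + |1-z|^θ ≥ 1
  have hsum2 : 2 ≤ ‖1 + z‖ + ‖1 - z‖ := by
    have h := norm_add_le (1 + z) (1 - z)
    rw [show (1 + z) + (1 - z) = (2:ℂ) by ring, Complex.norm_two] at h
    exact h
  have hone : (1 : ℝ) ≤ ‖1 + z‖ ^ θ + ‖1 - z‖ ^ θ := by
    rcases le_total 1 (‖1 + z‖) with h | h
    · have : (1:ℝ) ≤ ‖1 + z‖ ^ θ := by
        calc (1:ℝ) = 1 ^ θ := (Real.one_rpow θ).symm
        _ ≤ ‖1 + z‖ ^ θ := Real.rpow_le_rpow zero_le_one h hθ0.le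
      have := Real.rpow_nonneg (norm_nonneg (1 - z)) θ
      linarith
    · have h2 : (1:ℝ) ≤ ‖1 - z‖ := by linarith
      have : (1:ℝ) ≤ ‖1 - z‖ ^ θ := by
        calc (1:ℝ) = 1 ^ θ := (Real.one_rpow θ).symm
        _ ≤ ‖1 - z‖ ^ θ := Real.rpow_le_rpow zero_le_one h2 hθ0.le
      have := Real.rpow_nonneg (norm_nonneg (1 + z)) θ
      linarith
  have hABre : δ ≤ (A + B).re := by
    have : δ * 1 ≤ δ * (‖1 + z‖ ^ θ + ‖1 - z‖ ^ θ) :=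
      mul_le_mul_of_nonneg_left hone hδpos.le
    simp only [Complex.add_re]
    nlinarith
  have hABabs : δ ≤ ‖A + B‖ := hABre.trans (Complex.re_le_norm _)
  have hABne : A + B ≠ 0 := by
    intro h
    rw [h] at hABre; simp at hABre; linarith
  have hL : 1 - lensMap θ z = 2 * B / (A + B) := by
    rw [lensMap, ← hA, ← hB]
    field_simp
    ring
  have hBabs : ‖B‖ = ‖1 - z‖ ^ θ := by
    rw [hB, Complex.norm_cpow_of_ne_zero (by
      intro h; rw [h] at hre2; simp at hre2)]
    simp
  have key : ‖1 - lensMap θ z‖ = 2 * ‖1 - z‖ ^ θ / ‖A + B‖ := by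
    rw [hL, norm_div, norm_mul, hBabs, Complex.norm_two]
  have hφz : 1 - φ z = (1 - lensMap θ z) / 2 := by rw [hφ]; ring
  have heq : ‖1 - φ z‖ = (1 / 2) * ‖1 - lensMap θ z‖ := by
    rw [hφz, norm_div, Complex.norm_two]; ring
  refine ⟨heq, ?_⟩
  rw [heq, key]
  rw [show (1 : ℝ) / 2 * (2 * ‖1 - z‖ ^ θ / ‖A + B‖)
      = ‖1 - z‖ ^ θ / ‖A + B‖ by ring]
  exact div_le_div_of_nonneg_left (Real.rpow_nonneg (norm_nonneg _) θ) hδpos hABabs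
end

section
/- Let θ ∈ (0, 1), δ = cos(θπ/2), and define w(z) = exp(−((1 + z)/(1 − z))^θ) for z in the open unit disk D (principal branch of the power; note (1 + z)/(1 − z) has positive real part on D). Then for every z ∈ D with Re z ≥ 0, one has |w(z)| ≤ exp(−δ / |1 − z|^θ). -/
/-- For `θ ∈ (0,1)`, `δ = cos(θπ/2)` and `w(z) = exp(-((1+z)/(1-z))^θ)`
(principal branch), one has `|w(z)| ≤ exp(-δ/|1-z|^θ)` for `z` in the open unit disk
with `Re z ≥ 0`. -/
theorem abs_w_le (θ : ℝ) (hθ : θ ∈ Set.Ioo (0 : ℝ) 1)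
    (δ : ℝ) (hδ : δ = Real.cos (θ * Real.pi / 2))
    (w : ℂ → ℂ) (hw : ∀ z, w z = Complex.exp (-(((1 + z) / (1 - z)) ^ (θ : ℂ))))
    (z : ℂ) (hz : ‖z‖ < 1) (hre : 0 ≤ z.re) :
    ‖w z‖ ≤ Real.exp (-(δ / ‖1 - z‖ ^ θ)) := by
  obtain ⟨hθ0, hθ1⟩ := hθ
  have h1z : (1 : ℂ) - z ≠ 0 := by
    intro h
    have : z = 1 := by linear_combination -h
    simp [this] at hz
  have ha : 0 < ‖1 - z‖ := by
    simpa [norm_eq_zero] using h1z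
  set a := ‖1 - z‖ with ha_def
  set ζ := (1 + z) / (1 - z) with hζdef
  have habs1 : 1 ≤ ‖1 + z‖ := by
    have h2 : 1 ≤ Complex.normSq (1 + z) := by
      have := Complex.sq_norm z
      simp only [Complex.normSq_apply, Complex.add_re, Complex.add_im, Complex.one_re,
        Complex.one_im]
      nlinarith [Complex.sq_norm z, norm_nonneg z]
    nlinarith [norm_nonneg (1 + z), Complex.sq_norm (1 + z)]
  have hζre : 0 < ζ.re := by
    have hns : 0 < Complex.normSq (1 - z) := Complex.normSq_pos.mpr h1z
    have hz2 : Complex.normSq z < 1 := by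
      have := Complex.sq_norm z
      nlinarith [norm_nonneg z]
    have hnum : 0 < (1 + z).re * (1 - z).re + (1 + z).im * (1 - z).im := by
      simp only [Complex.add_re, Complex.add_im, Complex.sub_re, Complex.sub_im,
        Complex.one_re, Complex.one_im, Complex.normSq_apply] at *
      nlinarith
    rw [hζdef, Complex.div_re, ← add_div]
    exact div_pos hnum hns
  have hζ0 : ζ ≠ 0 := by
    intro h; rw [h] at hζre; simp at hζre
  have hζabs : 0 < ‖ζ‖ := by simpa [norm_eq_zero] using hζ0
  have hargbd : |ζ.arg| < Real.pi / 2 :=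
    Complex.abs_arg_lt_pi_div_two_iff.mpr (Or.inl hζre)
  -- compute the real part of ζ^θ
  have hcpow : (ζ ^ (θ : ℂ)).re = ‖ζ‖ ^ θ * Real.cos (θ * ζ.arg) := by
    rw [Complex.cpow_def_of_ne_zero hζ0, Complex.exp_re]
    simp only [Complex.mul_re, Complex.mul_im, Complex.ofReal_re, Complex.ofReal_im,
      Complex.log_re, Complex.log_im, mul_zero, zero_mul, sub_zero, add_zero]
    rw [Real.rpow_def_of_pos hζabs]
    ring_nf
  -- the key lower bound
  have hcos : Real.cos (θ * Real.pi / 2) ≤ Real.cos (θ * ζ.arg) := by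
    rw [← Real.cos_abs (θ * ζ.arg)]
    apply Real.cos_le_cos_of_nonneg_of_le_pi (abs_nonneg _)
    · nlinarith [Real.pi_pos]
    · rw [abs_mul, abs_of_pos hθ0]
      nlinarith [hargbd, abs_nonneg ζ.arg]
  have hδpos : 0 < δ := by
    rw [hδ]
    apply Real.cos_pos_of_mem_Ioo
    constructor <;> nlinarith [Real.pi_pos]
  have habsζ : 1 / a ≤ ‖ζ‖ := by
    rw [hζdef, norm_div]
    gcongr
  have hrpow : 1 / a ^ θ ≤ ‖ζ‖ ^ θ := by
    have h1 : (1 / a) ^ θ ≤ ‖ζ‖ ^ θ :=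
      Real.rpow_le_rpow (by positivity) habsζ hθ0.le
    rwa [Real.div_rpow zero_le_one ha.le, Real.one_rpow] at h1
  have hkey : δ / a ^ θ ≤ (ζ ^ (θ : ℂ)).re := by
    rw [hcpow, div_eq_mul_one_div]
    calc δ * (1 / a ^ θ) ≤ Real.cos (θ * ζ.arg) * ‖ζ‖ ^ θ := by
          apply mul_le_mul (hδ ▸ hcos) hrpow (by positivity) (hδ ▸ hcos |>.trans_lt' hδpos).le
      _ = ‖ζ‖ ^ θ * Real.cos (θ * ζ.arg) := by ring
  rw [hw, Complex.norm_exp, Complex.neg_re]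
  exact Real.exp_le_exp.mpr (by linarith)
end

section
/- Let θ ∈ (0, 1) and δ = cos(θπ/2). Define the lens map λ_θ, the map φ = (1 + λ_θ)/2, the function w(z) = exp(−((1 + z)/(1 − z))^θ), and ψ = w ∘ φ. Then for every z in the open unit disk D, |ψ(z)| ≤ exp(−δ² / |1 − z|^{θ²}). -/
private lemma cpow_real_facts (c : ℂ) (hc : c ≠ 0) (t : ℝ) :
    (c ^ (t : ℂ)).re = ‖c‖ ^ t * Real.cos (t * Complex.arg c) ∧
    (c ^ (t : ℂ)).im = ‖c‖ ^ t * Real.sin (t * Complex.arg c) ∧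
    ‖c ^ (t : ℂ)‖ = ‖c‖ ^ t := by
  have h1 : (Complex.log c * (t : ℂ)).re = t * Real.log (‖c‖) := by
    simp only [Complex.mul_re, Complex.ofReal_re, Complex.ofReal_im, Complex.log_re,
      Complex.log_im, mul_zero, sub_zero]
    ring
  have h2 : (Complex.log c * (t : ℂ)).im = t * Complex.arg c := by
    simp only [Complex.mul_im, Complex.ofReal_re, Complex.ofReal_im, Complex.log_re,
      Complex.log_im, zero_mul, add_zero]
    ring
  have habs : Real.exp (t * Real.log (‖c‖)) = ‖c‖ ^ t := by
    rw [Real.rpow_def_of_pos (norm_pos_iff.mpr hc), mul_comm]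
  rw [Complex.cpow_def_of_ne_zero hc]
  refine ⟨?_, ?_, ?_⟩
  · rw [Complex.exp_re, h1, h2, habs]
  · rw [Complex.exp_im, h1, h2, habs]
  · rw [Complex.norm_exp, h1, habs]

private lemma abs_arcsin (x : ℝ) : |Real.arcsin x| = Real.arcsin |x| := by
  rcases le_total 0 x with h | h
  · rw [abs_of_nonneg h, abs_of_nonneg (Real.arcsin_nonneg.2 h)]
  · rw [abs_of_nonpos h, abs_of_nonpos (Real.arcsin_nonpos.2 h), Real.arcsin_neg]

private lemma abs_sin_eq (x : ℝ) (hx : |x| ≤ Real.pi) : |Real.sin x| = Real.sin |x| := by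
  rcases le_total 0 x with h | h
  · rw [abs_of_nonneg h,
      abs_of_nonneg (Real.sin_nonneg_of_nonneg_of_le_pi h ((le_abs_self x).trans hx))]
  · have hpx : -Real.pi ≤ x := by
      have := neg_abs_le x; linarith [abs_nonneg x, hx]
    rw [abs_of_nonpos h, Real.sin_neg,
      abs_of_nonpos (Real.sin_nonpos_of_nonpos_of_neg_pi_le h hpx)]

set_option maxHeartbeats 1600000 in
/-- For `θ ∈ (0,1)`, `δ = cos(θπ/2)`, `φ = (1 + λ_θ)/2`,
`w(z) = exp(-((1+z)/(1-z))^θ)` and `ψ = w ∘ φ`, one has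
`|ψ(z)| ≤ exp(-δ²/|1-z|^{θ²})` for every `z` in the open unit disk. -/
theorem abs_psi_le (θ : ℝ) (hθ : θ ∈ Set.Ioo (0 : ℝ) 1)
    (δ : ℝ) (hδ : δ = Real.cos (θ * Real.pi / 2))
    (φ : ℂ → ℂ) (hφ : ∀ z, φ z = (1 + lensMap θ z) / 2)
    (w : ℂ → ℂ) (hw : ∀ z, w z = Complex.exp (-(((1 + z) / (1 - z)) ^ (θ : ℂ))))
    (ψ : ℂ → ℂ) (hψ : ψ = w ∘ φ)
    (z : ℂ) (hz : ‖z‖ < 1) :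
    ‖ψ z‖ ≤ Real.exp (-(δ ^ 2 / ‖1 - z‖ ^ (θ ^ 2))) := by
  obtain ⟨hθ0, hθ1⟩ := hθ
  have hpi : (0 : ℝ) < Real.pi := Real.pi_pos
  -- basic nonvanishing
  have h1mz : (1 : ℂ) - z ≠ 0 := by
    intro h
    have : (1 : ℂ) = z := by linear_combination h
    rw [← this] at hz; simp at hz
  have h1pz : (1 : ℂ) + z ≠ 0 := by
    intro h
    have : z = -1 := by linear_combination h
    rw [this] at hz; simp at hz
  have hx0 : 0 < ‖1 - z‖ := norm_pos_iff.mpr h1mz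
  set x : ℝ := ‖1 - z‖ with hxdef
  -- real parts
  have hre1pz : 0 < (1 + z).re := by
    have := Complex.abs_re_le_norm z
    simp only [Complex.add_re, Complex.one_re]
    cases' abs_le.1 this with h _
    linarith
  have hre1mz : 0 < (1 - z).re := by
    have := Complex.abs_re_le_norm z
    simp only [Complex.sub_re, Complex.one_re]
    cases' abs_le.1 this with _ h
    linarith
  set s : ℂ := (1 + z) / (1 - z) with hsdef
  have hsre : 0 < s.re := by
    have hnum : (1 + z).re * (1 - z).re + (1 + z).im * (1 - z).im
        = 1 - Complex.normSq z := by
      simp only [Complex.normSq_apply, Complex.add_re, Complex.add_im, Complex.sub_re,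
        Complex.sub_im, Complex.one_re, Complex.one_im]
      ring
    have hns : 0 < Complex.normSq (1 - z) := Complex.normSq_pos.2 h1mz
    have hnz : Complex.normSq z < 1 := by
      have : Complex.normSq z = ‖z‖ ^ 2 := (Complex.sq_norm z).symm
      nlinarith [norm_nonneg z]
    rw [hsdef, Complex.div_re, ← add_div, hnum]
    exact div_pos (by linarith) hns
  have hs0 : s ≠ 0 := by
    intro h; rw [h] at hsre; simp at hsre
  -- arg bounds
  have harg_s : |Complex.arg s| < Real.pi / 2 :=
    Complex.abs_arg_lt_pi_div_two_iff.2 (Or.inl hsre)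
  have harg_1pz : |Complex.arg (1 + z)| < Real.pi / 2 :=
    Complex.abs_arg_lt_pi_div_two_iff.2 (Or.inl hre1pz)
  have harg_1mz : |Complex.arg (1 - z)| < Real.pi / 2 :=
    Complex.abs_arg_lt_pi_div_two_iff.2 (Or.inl hre1mz)
  set a : ℝ := Complex.arg s with hadef
  set q : ℂ := s ^ (θ : ℂ) with hqdef
  set R : ℝ := ‖s‖ ^ θ with hRdef
  obtain ⟨hqre, hqim, hqabs⟩ := cpow_real_facts s hs0 θ
  have hRpos : 0 < R := Real.rpow_pos_of_pos (norm_pos_iff.mpr hs0) θ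
  -- δ facts
  have hθpi2 : θ * Real.pi / 2 < Real.pi / 2 := by nlinarith
  have hδpos : 0 < δ := by
    rw [hδ]
    apply Real.cos_pos_of_mem_Ioo
    constructor <;> [nlinarith; exact hθpi2]
  have hδle1 : δ ≤ 1 := by rw [hδ]; exact Real.cos_le_one _
  have hθa : |θ * a| ≤ θ * Real.pi / 2 := by
    rw [abs_mul, abs_of_nonneg hθ0.le]
    have := harg_s.le
    calc θ * |a| ≤ θ * (Real.pi / 2) := by nlinarith [abs_nonneg a]
      _ = θ * Real.pi / 2 := by ring
  have hcosθa : δ ≤ Real.cos (θ * a) := by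
    rw [← Real.cos_abs (θ * a), hδ]
    exact Real.cos_le_cos_of_nonneg_of_le_pi (abs_nonneg _) (by linarith) hθa
  have hqre_pos : 0 < q.re := by
    rw [hqre]; exact mul_pos hRpos (lt_of_lt_of_le hδpos hcosθa)
  have hqre_ge : δ * R ≤ q.re := by
    rw [hqre]; nlinarith
  -- the key point c = 1 + 2q
  set c : ℂ := 1 + 2 * q with hcdef
  have hcre : c.re = 1 + 2 * q.re := by simp [hcdef]
  have hcim : c.im = 2 * q.im := by simp [hcdef]
  have hcre_pos : 0 < c.re := by rw [hcre]; linarith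
  have hc0 : c ≠ 0 := by
    intro h; rw [h] at hcre_pos; simp at hcre_pos
  have hcabs_pos : 0 < ‖c‖ := norm_pos_iff.mpr hc0
  have hcabs_ge1 : 1 ≤ ‖c‖ := by
    have h1 : c.re ≤ ‖c‖ := Complex.re_le_norm c
    rw [hcre] at h1; linarith
  -- |c| ≥ 2R
  have h2R : 2 * R ≤ ‖c‖ := by
    have hsq : ‖c‖ ^ 2 = c.re ^ 2 + c.im ^ 2 := by
      rw [Complex.sq_norm, Complex.normSq_apply]; ring
    have hq2 : q.re ^ 2 + q.im ^ 2 = R ^ 2 := by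
      rw [hqre, hqim]
      have h := Real.sin_sq_add_cos_sq (θ * a)
      linear_combination (‖s‖ ^ θ) ^ 2 * h
    have : (2 * R) ^ 2 ≤ ‖c‖ ^ 2 := by
      rw [hsq, hcre, hcim]; nlinarith
    nlinarith
  -- |arg c| ≤ |θ a|
  have hargc : |Complex.arg c| ≤ |θ * a| := by
    rw [Complex.arg_of_re_nonneg hcre_pos.le, abs_arcsin]
    have hsin : |c.im / ‖c‖| ≤ |Real.sin (θ * a)| := by
      rw [abs_div, abs_of_nonneg hcabs_pos.le, div_le_iff₀ hcabs_pos, hcim]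
      calc |2 * q.im| = 2 * R * |Real.sin (θ * a)| := by
            rw [hqim, abs_mul, abs_mul]
            rw [abs_of_nonneg hRpos.le]; simp [abs_of_nonneg, hRpos.le]; ring
        _ ≤ |Real.sin (θ * a)| * ‖c‖ := by nlinarith [abs_nonneg (Real.sin (θ * a))]
    calc Real.arcsin |c.im / ‖c‖| ≤ Real.arcsin |Real.sin (θ * a)| :=
          Real.monotone_arcsin hsin
      _ = Real.arcsin (Real.sin |θ * a|) := by
          rw [abs_sin_eq]
          nlinarith
      _ = |θ * a| := Real.arcsin_sin (by linarith [abs_nonneg (θ * a)]) (by nlinarith)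
  -- Re(c^θ) ≥ δ |c|^θ
  obtain ⟨hcθre, _, _⟩ := cpow_real_facts c hc0 θ
  have hθargc : |θ * Complex.arg c| ≤ θ * Real.pi / 2 := by
    rw [abs_mul, abs_of_nonneg hθ0.le]
    have h1 : |Complex.arg c| ≤ θ * Real.pi / 2 := hargc.trans hθa
    nlinarith [abs_nonneg (Complex.arg c)]
  have hcosc : δ ≤ Real.cos (θ * Complex.arg c) := by
    rw [← Real.cos_abs, hδ]
    exact Real.cos_le_cos_of_nonneg_of_le_pi (abs_nonneg _) (by linarith) hθargc
  -- |c| ≥ δ * x^(-θ)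
  have hclow : δ * x ^ (-θ) ≤ ‖c‖ := by
    rcases le_total 1 x with hx1 | hx1
    · have : x ^ (-θ) ≤ 1 := Real.rpow_le_one_of_one_le_of_nonpos hx1 (by linarith)
      nlinarith
    · have h1pzabs : (1 : ℝ) ≤ ‖1 + z‖ := by
        have : (1 : ℂ) + z = 2 - (1 - z) := by ring
        rw [this]
        have h2 : ‖(2:ℂ)‖ ≤ ‖2 - (1 - z)‖ + ‖1 - z‖ := by
          calc ‖(2:ℂ)‖ = ‖(2 - (1 - z)) + (1 - z)‖ := by ring_nf
            _ ≤ _ := norm_add_le _ _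
        rw [Complex.norm_two] at h2
        linarith
      have hsabs : x⁻¹ ≤ ‖s‖ := by
        rw [hsdef, norm_div]
        rw [← hxdef, le_div_iff₀ hx0, inv_mul_cancel₀ hx0.ne']
        exact h1pzabs
      have hR' : x ^ (-θ) ≤ R := by
        rw [hRdef, Real.rpow_neg hx0.le, ← Real.inv_rpow hx0.le]
        exact Real.rpow_le_rpow (by positivity) hsabs hθ0.le
      have : δ * x ^ (-θ) ≤ δ * R := by nlinarith
      have h2 : δ * R ≤ q.re := hqre_ge
      have h3 : q.re ≤ ‖c‖ := by
        have := Complex.re_le_norm c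
        rw [hcre] at this; linarith
      linarith
  -- final real chain
  have hmain : δ ^ 2 / x ^ (θ ^ 2) ≤ (c ^ (θ : ℂ)).re := by
    rw [hcθre]
    have hstep : δ * x ^ (-θ) > 0 := by positivity
    have h1 : (δ * x ^ (-θ)) ^ θ ≤ ‖c‖ ^ θ :=
      Real.rpow_le_rpow hstep.le hclow hθ0.le
    have h2 : (δ * x ^ (-θ)) ^ θ = δ ^ θ * x ^ (-(θ * θ)) := by
      rw [Real.mul_rpow hδpos.le (by positivity), ← Real.rpow_mul hx0.le, neg_mul]
    have h3 : δ ≤ δ ^ θ := by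
      calc δ = δ ^ (1 : ℝ) := (Real.rpow_one δ).symm
        _ ≤ δ ^ θ := Real.rpow_le_rpow_of_exponent_ge hδpos hδle1 hθ1.le
    have h4 : x ^ (-(θ * θ)) = (x ^ (θ ^ 2))⁻¹ := by
      rw [Real.rpow_neg hx0.le, pow_two]
    have hxp : 0 < x ^ (θ ^ 2) := Real.rpow_pos_of_pos hx0 _
    have h5 : δ * x ^ (-(θ * θ)) * δ ≤ ‖c‖ ^ θ * Real.cos (θ * Complex.arg c) := by
      have hA : 0 < ‖c‖ ^ θ := Real.rpow_pos_of_pos hcabs_pos θ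
      have hB : δ * x ^ (-(θ * θ)) ≤ ‖c‖ ^ θ := by
        calc δ * x ^ (-(θ * θ)) ≤ δ ^ θ * x ^ (-(θ * θ)) := by
              have : 0 < x ^ (-(θ * θ)) := Real.rpow_pos_of_pos hx0 _
              nlinarith
          _ = (δ * x ^ (-θ)) ^ θ := h2.symm
          _ ≤ ‖c‖ ^ θ := h1
      have hC : 0 < δ * x ^ (-(θ * θ)) := by positivity
      nlinarith
    calc δ ^ 2 / x ^ (θ ^ 2) = δ * x ^ (-(θ * θ)) * δ := by
          rw [h4]; field_simp
      _ ≤ _ := h5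
  -- algebraic identity: ψ z = exp (-(c ^ θ))
  set u : ℂ := (1 + z) ^ (θ : ℂ) with hudef
  set v : ℂ := (1 - z) ^ (θ : ℂ) with hvdef
  have hv0 : v ≠ 0 := by
    rw [hvdef, Ne, Complex.cpow_eq_zero_iff]
    tauto
  have hlog : Complex.log (1 + z) = Complex.log s + Complex.log (1 - z) := by
    have hmul : s * (1 - z) = 1 + z := div_mul_cancel₀ _ h1mz
    have harg : Complex.arg s + Complex.arg (1 - z) ∈ Set.Ioc (-Real.pi) Real.pi := by
      constructor
      · cases' abs_lt.1 harg_s with h1 _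
        cases' abs_lt.1 harg_1mz with h2 _
        linarith
      · cases' abs_lt.1 harg_s with _ h1
        cases' abs_lt.1 harg_1mz with _ h2
        linarith
    rw [← hmul]
    exact Complex.log_mul hs0 h1mz harg
  have huqv : u = q * v := by
    rw [hudef, hqdef, hvdef, Complex.cpow_def_of_ne_zero h1pz,
      Complex.cpow_def_of_ne_zero hs0, Complex.cpow_def_of_ne_zero h1mz,
      ← Complex.exp_add, hlog]
    ring_nf
  have hq1 : q + 1 ≠ 0 := by
    intro h
    have : (q + 1).re = 0 := by rw [h]; simp
    simp only [Complex.add_re, Complex.one_re] at this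
    linarith
  have huv0 : u + v ≠ 0 := by
    rw [huqv]
    intro h
    have : (q + 1) * v = 0 := by linear_combination h
    rcases mul_eq_zero.1 this with h' | h'
    · exact hq1 h'
    · exact hv0 h'
  have hlens : lensMap θ z = (q - 1) / (q + 1) := by
    rw [lensMap, ← hudef, ← hvdef, huqv]
    rw [show q * v - v = (q - 1) * v by ring, show q * v + v = (q + 1) * v by ring]
    rw [mul_div_mul_right _ _ hv0]
  have hratio : (1 + φ z) / (1 - φ z) = c := by
    rw [hφ, hlens, hcdef]
    field_simp
    ring
  have hψz : ψ z = Complex.exp (-(c ^ (θ : ℂ))) := by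
    rw [hψ, Function.comp_apply, hw, hratio]
  rw [hψz, Complex.norm_exp]
  apply Real.exp_le_exp.2
  simp only [Complex.neg_re]
  exact neg_le_neg hmain
end

section
/- Let θ ∈ (0, 1) and δ = cos(θπ/2). (i) For every u in the open unit disk D with Re u ≥ 0, one has Re(((1 + u)/(1 − u))^θ) ≥ δ · 2^{−θ}. (ii) Consequently, with φ = (1 + λ_θ)/2, w(z) = exp(−((1 + z)/(1 − z))^θ) and ψ = w ∘ φ, one has |ψ(z)| ≤ exp(−δ · 2^{−θ}) < 1 for every z ∈ D; in particular sup_{z ∈ D} |ψ(z)| < 1. -/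
lemma reCpowEq (v : ℂ) (hv : v ≠ 0) (θ : ℝ) :
    (v ^ (θ : ℂ)).re = ‖v‖ ^ θ * Real.cos (θ * Complex.arg v) := by
  rw [Complex.cpow_def_of_ne_zero hv, Complex.exp_re]
  have h1 : (Complex.log v * (θ : ℂ)).re = θ * Real.log (‖v‖) := by
    simp [Complex.mul_re, Complex.log_re]; ring
  have h2 : (Complex.log v * (θ : ℂ)).im = θ * Complex.arg v := by
    simp [Complex.mul_im, Complex.log_im]; ring
  rw [h1, h2, Real.rpow_def_of_pos (norm_pos_iff.mpr hv), mul_comm (Real.log _)]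

lemma mulCpowArg {x y : ℂ} (hx : x ≠ 0) (hy : y ≠ 0)
    (h : Complex.arg x + Complex.arg y ∈ Set.Ioc (-Real.pi) Real.pi) (θ : ℝ) :
    (x * y) ^ (θ : ℂ) = x ^ (θ : ℂ) * y ^ (θ : ℂ) := by
  rw [Complex.cpow_def_of_ne_zero hx, Complex.cpow_def_of_ne_zero hy,
    Complex.cpow_def_of_ne_zero (mul_ne_zero hx hy), ← Complex.exp_add, ← add_mul,
    Complex.log_mul hx hy h]

lemma oneSubNeZero {z : ℂ} (hz : ‖z‖ < 1) : (1 : ℂ) - z ≠ 0 := by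
  intro h; rw [sub_eq_zero] at h; rw [← h] at hz; simp at hz

lemma reDivPos {z : ℂ} (hz : ‖z‖ < 1) : 0 < ((1 + z) / (1 - z)).re := by
  have hsq : z.re ^ 2 + z.im ^ 2 < 1 := by
    nlinarith [norm_nonneg z, Complex.sq_norm z, Complex.normSq_apply z]
  have hnorm : 0 < Complex.normSq (1 - z) := by
    rw [Complex.normSq_pos]; exact oneSubNeZero hz
  rw [Complex.div_re, ← add_div]
  apply div_pos _ hnorm
  simp only [Complex.add_re, Complex.sub_re, Complex.add_im, Complex.sub_im,
    Complex.one_re, Complex.one_im]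
  nlinarith

lemma partOne {θ : ℝ} (hθ : θ ∈ Set.Ioo (0:ℝ) 1) {u : ℂ} (hu : ‖u‖ < 1)
    (hre : 0 ≤ u.re) :
    (((1 + u) / (1 - u)) ^ (θ : ℂ)).re ≥ Real.cos (θ * Real.pi / 2) * 2 ^ (-θ) := by
  set v := (1 + u) / (1 - u) with hv
  have hrev : 0 < v.re := reDivPos hu
  have hv0 : v ≠ 0 := fun h => by simp [h] at hrev
  have hne : (1:ℂ) - u ≠ 0 := oneSubNeZero hu
  have hA : (1:ℝ) ≤ ‖1 + u‖ := by
    have h1 : (1:ℝ) ≤ (1 + u).re := by simp [Complex.add_re]; linarith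
    exact h1.trans (Complex.re_le_norm _)
  have hB : ‖1 - u‖ < 2 := by
    calc ‖1 - u‖ ≤ ‖(1:ℂ)‖ + ‖u‖ := by
          simpa [sub_eq_add_neg] using norm_add_le (1:ℂ) (-u)
    _ < 2 := by simp; linarith
  have hBpos : 0 < ‖1 - u‖ := norm_pos_iff.mpr hne
  have hvabs : (1:ℝ)/2 ≤ ‖v‖ := by
    rw [hv, norm_div, le_div_iff₀ hBpos]
    nlinarith
  have h2 : (2:ℝ) ^ (-θ) ≤ ‖v‖ ^ θ := by
    have he : (2:ℝ)^(-θ) = ((1:ℝ)/2)^θ := by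
      rw [Real.rpow_neg (by norm_num), one_div, ← Real.inv_rpow (by norm_num)]
    rw [he]
    exact Real.rpow_le_rpow (by norm_num) hvabs hθ.1.le
  have harg : |Complex.arg v| ≤ Real.pi/2 :=
    (Complex.abs_arg_lt_pi_div_two_iff.mpr (Or.inl hrev)).le
  have hcos : Real.cos (θ * Real.pi / 2) ≤ Real.cos (θ * Complex.arg v) := by
    rw [← Real.cos_abs (θ * Complex.arg v)]
    apply Real.cos_le_cos_of_nonneg_of_le_pi (abs_nonneg _)
    · nlinarith [Real.pi_pos, hθ.1, hθ.2]
    · rw [abs_mul, abs_of_pos hθ.1]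
      nlinarith [hθ.1, hθ.2, abs_nonneg (Complex.arg v), Real.pi_pos]
  have hδ0 : 0 ≤ Real.cos (θ * Real.pi / 2) := by
    apply Real.cos_nonneg_of_mem_Icc
    constructor <;> nlinarith [Real.pi_pos, hθ.1.le, hθ.2.le]
  rw [ge_iff_le, reCpowEq v hv0 θ]
  have h2pos : (0:ℝ) < (2:ℝ)^(-θ) := Real.rpow_pos_of_pos (by norm_num) _
  nlinarith [Real.rpow_nonneg (norm_nonneg v) θ]

lemma lensAbsLt {θ : ℝ} (hθ : θ ∈ Set.Ioo (0:ℝ) 1) {z : ℂ} (hz : ‖z‖ < 1) :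
    ‖lensMap θ z‖ < 1 := by
  have hne2 : (1:ℂ) - z ≠ 0 := oneSubNeZero hz
  have hne1 : (1:ℂ) + z ≠ 0 := by
    have h := oneSubNeZero (show ‖-z‖ < 1 by simpa using hz)
    simpa [sub_neg_eq_add] using h
  have hb : (1 - z) ^ (θ:ℂ) ≠ 0 := by
    rw [Complex.cpow_def_of_ne_zero hne2]; exact Complex.exp_ne_zero _
  have hre2 : 0 < (1 - z).re := by
    have : z.re < 1 :=
      lt_of_le_of_lt ((le_abs_self _).trans (Complex.abs_re_le_norm z)) hz
    simp [Complex.sub_re]; linarith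
  have hrev : 0 < ((1+z)/(1-z)).re := reDivPos hz
  have hvne : ((1:ℂ)+z)/(1-z) ≠ 0 := fun h => by simp [h] at hrev
  have hargv : |Complex.arg ((1+z)/(1-z))| < Real.pi/2 :=
    Complex.abs_arg_lt_pi_div_two_iff.mpr (Or.inl hrev)
  have harg2 : |Complex.arg (1-z)| < Real.pi/2 :=
    Complex.abs_arg_lt_pi_div_two_iff.mpr (Or.inl hre2)
  have key : (1 + z) ^ (θ:ℂ) = ((1+z)/(1-z)) ^ (θ:ℂ) * (1-z) ^ (θ:ℂ) := by
    rw [← mulCpowArg hvne hne2 ?_ θ, div_mul_cancel₀ _ hne2]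
    rw [abs_lt] at hargv harg2
    constructor
    · nlinarith [hargv.1, harg2.1, Real.pi_pos]
    · nlinarith [hargv.2, harg2.2, Real.pi_pos]
  set c := ((1+z)/(1-z)) ^ (θ:ℂ) with hc
  have hcre : 0 < c.re := by
    rw [hc, reCpowEq _ hvne]
    apply mul_pos (Real.rpow_pos_of_pos (norm_pos_iff.mpr hvne) _)
    apply Real.cos_pos_of_mem_Ioo
    have habs : |θ * Complex.arg ((1+z)/(1-z))| < Real.pi/2 := by
      rw [abs_mul, abs_of_pos hθ.1]
      nlinarith [hθ.1, hθ.2, abs_nonneg (Complex.arg ((1+z)/(1-z))), hargv]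
    rw [abs_lt] at habs
    exact ⟨habs.1, habs.2⟩
  have hc1 : c + 1 ≠ 0 := by
    intro h
    have h2 : (c+1).re = 0 := by rw [h]; simp
    simp [Complex.add_re] at h2; linarith
  have hlm : lensMap θ z = (c - 1) / (c + 1) := by
    unfold lensMap
    rw [key]
    have hden : c * (1 - z) ^ (θ:ℂ) + (1 - z) ^ (θ:ℂ) = (c + 1) * (1 - z) ^ (θ:ℂ) := by ring
    rw [hden, div_eq_div_iff (mul_ne_zero hc1 hb) hc1]
    ring
  rw [hlm, norm_div, div_lt_one (norm_pos_iff.mpr hc1)]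
  have hsq : (‖c-1‖)^2 < (‖c+1‖)^2 := by
    rw [Complex.sq_norm, Complex.sq_norm, Complex.normSq_apply, Complex.normSq_apply]
    simp only [Complex.sub_re, Complex.add_re, Complex.sub_im, Complex.add_im,
      Complex.one_re, Complex.one_im]
    nlinarith
  exact lt_of_pow_lt_pow_left₀ 2 (norm_nonneg _) hsq

/-- For `θ ∈ (0,1)` and `δ = cos(θπ/2)`:
(i) for `u` in the open unit disk with `Re u ≥ 0`, `Re(((1+u)/(1-u))^θ) ≥ δ 2^{-θ}`;
(ii) with `φ = (1 + λ_θ)/2`, `w(z) = exp(-((1+z)/(1-z))^θ)` and `ψ = w ∘ φ`,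
`|ψ(z)| ≤ exp(-δ 2^{-θ}) < 1` on the open unit disk; in particular the sup of `|ψ|`
over the disk is `< 1`. -/
theorem re_cpow_ge_and_abs_psi_lt_one (θ : ℝ) (hθ : θ ∈ Set.Ioo (0 : ℝ) 1)
    (δ : ℝ) (hδ : δ = Real.cos (θ * Real.pi / 2))
    (φ : ℂ → ℂ) (hφ : ∀ z, φ z = (1 + lensMap θ z) / 2)
    (w : ℂ → ℂ) (hw : ∀ z, w z = Complex.exp (-(((1 + z) / (1 - z)) ^ (θ : ℂ))))
    (ψ : ℂ → ℂ) (hψ : ψ = w ∘ φ) :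
    (∀ u : ℂ, ‖u‖ < 1 → 0 ≤ u.re →
        (((1 + u) / (1 - u)) ^ (θ : ℂ)).re ≥ δ * 2 ^ (-θ)) ∧
      (∀ z : ℂ, ‖z‖ < 1 → ‖ψ z‖ ≤ Real.exp (-(δ * 2 ^ (-θ)))) ∧
      Real.exp (-(δ * 2 ^ (-θ))) < 1 ∧
      ⨆ z : {z : ℂ // ‖z‖ < 1}, ‖ψ z‖ < 1 := by
  have hδ0 : 0 < δ := by
    rw [hδ]; apply Real.cos_pos_of_mem_Ioo
    constructor <;> nlinarith [Real.pi_pos, hθ.1, hθ.2]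
  have h2pos : (0:ℝ) < (2:ℝ)^(-θ) := Real.rpow_pos_of_pos (by norm_num) _
  have part1 : ∀ u : ℂ, ‖u‖ < 1 → 0 ≤ u.re →
      (((1 + u) / (1 - u)) ^ (θ : ℂ)).re ≥ δ * 2 ^ (-θ) := by
    intro u hu hre; rw [hδ]; exact partOne hθ hu hre
  have part2 : ∀ z : ℂ, ‖z‖ < 1 →
      ‖ψ z‖ ≤ Real.exp (-(δ * 2 ^ (-θ))) := by
    intro z hz
    have hl := lensAbsLt hθ hz
    have hφabs : ‖φ z‖ < 1 := by
      rw [hφ z, norm_div]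
      have hle : ‖1 + lensMap θ z‖ ≤ 1 + ‖lensMap θ z‖ := by
        simpa using norm_add_le (1:ℂ) (lensMap θ z)
      have h2 : ‖(2:ℂ)‖ = 2 := by simp
      rw [h2, div_lt_one (by norm_num)]
      linarith
    have hφre : 0 ≤ (φ z).re := by
      have hlre : -(1:ℝ) ≤ (lensMap θ z).re := by
        nlinarith [Complex.abs_re_le_norm (lensMap θ z), neg_abs_le (lensMap θ z).re,
          le_abs_self (lensMap θ z).re]
      have hre : ((1 + lensMap θ z)/2).re = (1 + (lensMap θ z).re)/2 := by
        rw [Complex.div_re]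
        simp [Complex.normSq_apply]
        ring
      rw [hφ z, hre]
      linarith
    have hkey := part1 (φ z) hφabs hφre
    rw [hψ]
    simp only [Function.comp_apply]
    rw [hw, Complex.norm_exp]
    apply Real.exp_le_exp.mpr
    simp only [Complex.neg_re]
    linarith
  have hlt1 : Real.exp (-(δ * 2 ^ (-θ))) < 1 := by
    rw [Real.exp_lt_one_iff]; nlinarith
  refine ⟨part1, part2, hlt1, ?_⟩
  have hne : Nonempty {z : ℂ // ‖z‖ < 1} := ⟨⟨0, by simp⟩⟩
  exact lt_of_le_of_lt (ciSup_le fun z => part2 z z.2) hlt1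
end

section
/- Let θ ∈ (0, 1) and define φ = (1 + λ_θ)/2 on the open unit disk D. Then there exists a constant C ≥ 1 such that for every z ∈ D, |1 − φ(z)| ≤ C · (1 − |φ(z)|); that is, φ(D) touches the boundary of D only at the point 1, and it does so non-tangentially. -/
set_option maxHeartbeats 1000000 in
/-- For `θ ∈ (0,1)` and `φ = (1 + λ_θ)/2`, there is a constant `C ≥ 1`
such that `|1 - φ(z)| ≤ C (1 - |φ(z)|)` for every `z` in the open unit disk:
`φ(𝔻)` touches the unit circle only at `1`, non-tangentially. -/
theorem phi_nontangential (θ : ℝ) (hθ : θ ∈ Set.Ioo (0 : ℝ) 1)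
    (φ : ℂ → ℂ) (hφ : ∀ z, φ z = (1 + lensMap θ z) / 2) :
    ∃ C : ℝ, 1 ≤ C ∧ ∀ z : ℂ, ‖z‖ < 1 →
      ‖1 - φ z‖ ≤ C * (1 - ‖φ z‖) := by
  obtain ⟨hθ0, hθ1⟩ := hθ
  have hπ := Real.pi_pos
  set c := Real.cos (θ * (Real.pi / 2)) with hc_def
  have hc_pos : 0 < c := Real.cos_pos_of_mem_Ioo ⟨by nlinarith, by nlinarith⟩
  have hc_le : c ≤ 1 := Real.cos_le_one _
  refine ⟨1 / c, by rw [le_div_iff₀ hc_pos]; linarith, ?_⟩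
  intro z hz
  set u : ℂ := 1 + z with hu_def
  set v : ℂ := 1 - z with hv_def
  set a : ℂ := u ^ (θ : ℂ) with ha_def
  set b : ℂ := v ^ (θ : ℂ) with hb_def
  have hzre : |z.re| ≤ ‖z‖ := Complex.abs_re_le_norm z
  have hur : 0 < u.re := by
    have : u.re = 1 + z.re := by simp [hu_def]
    rw [this]; cases abs_le.mp hzre; linarith
  have hvr : 0 < v.re := by
    have : v.re = 1 - z.re := by simp [hv_def]
    rw [this]; cases abs_le.mp hzre; linarith
  have hu0 : u ≠ 0 := fun h => by rw [h] at hur; simp at hur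
  have hv0 : v ≠ 0 := fun h => by rw [h] at hvr; simp at hvr
  have ha0 : a ≠ 0 := by
    rw [ha_def, Ne, Complex.cpow_eq_zero_iff]; tauto
  have hb0 : b ≠ 0 := by
    rw [hb_def, Ne, Complex.cpow_eq_zero_iff]; tauto
  have hA : 0 < ‖a‖ := norm_pos_iff.mpr ha0
  have hB : 0 < ‖b‖ := norm_pos_iff.mpr hb0
  -- the angle between u and v is at most π/2
  have hargu : |u.arg| < Real.pi / 2 := Complex.abs_arg_lt_pi_div_two_iff.mpr (Or.inl hur)
  have hargv : |v.arg| < Real.pi / 2 := Complex.abs_arg_lt_pi_div_two_iff.mpr (Or.inl hvr)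
  have hδcos : 0 ≤ Real.cos (u.arg - v.arg) := by
    rw [Real.cos_sub, Complex.cos_arg hu0, Complex.cos_arg hv0, Complex.sin_arg,
      Complex.sin_arg, div_mul_div_comm, div_mul_div_comm, ← add_div]
    apply div_nonneg _ (by positivity)
    have h1 : u.re * v.re + u.im * v.im = 1 - (z.re ^ 2 + z.im ^ 2) := by
      simp [hu_def, hv_def]; ring
    have h2 : z.re ^ 2 + z.im ^ 2 = ‖z‖ ^ 2 := by
      rw [Complex.sq_norm, Complex.normSq_apply]; ring
    nlinarith [norm_nonneg z]
  have hδ : |u.arg - v.arg| ≤ Real.pi / 2 := by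
    by_contra h
    push_neg at h
    have hlt : |u.arg - v.arg| < Real.pi + Real.pi / 2 := by
      have := abs_sub (u.arg) (v.arg)
      calc |u.arg - v.arg| ≤ |u.arg| + |v.arg| := abs_sub _ _
        _ < Real.pi + Real.pi / 2 := by linarith
    have := Real.cos_neg_of_pi_div_two_lt_of_lt h hlt
    rw [← Real.cos_abs] at hδcos
    linarith
  have hkey : c ≤ Real.cos (θ * (u.arg - v.arg)) := by
    rw [← Real.cos_abs (θ * (u.arg - v.arg))]
    apply Real.cos_le_cos_of_nonneg_of_le_pi (abs_nonneg _) (by nlinarith)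
    rw [abs_mul, abs_of_pos hθ0]
    nlinarith [abs_nonneg (u.arg - v.arg)]
  -- exponential representation
  have ha_exp : a = Complex.exp (Complex.log u * (θ : ℂ)) :=
    Complex.cpow_def_of_ne_zero hu0 _
  have hb_exp : b = Complex.exp (Complex.log v * (θ : ℂ)) :=
    Complex.cpow_def_of_ne_zero hv0 _
  have hab : (a * (starRingEnd ℂ) b).re
      = ‖a‖ * ‖b‖ * Real.cos (θ * (u.arg - v.arg)) := by
    have hre : (Complex.log u * (θ : ℂ) + (starRingEnd ℂ) (Complex.log v * (θ : ℂ))).re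
        = (Complex.log u * (θ : ℂ)).re + (Complex.log v * (θ : ℂ)).re := by
      simp only [Complex.add_re, Complex.conj_re]
    have him : (Complex.log u * (θ : ℂ) + (starRingEnd ℂ) (Complex.log v * (θ : ℂ))).im
        = θ * (u.arg - v.arg) := by
      simp only [Complex.add_im, Complex.conj_im, Complex.mul_im, Complex.ofReal_re,
        Complex.ofReal_im, Complex.log_im]
      ring
    rw [ha_exp, hb_exp, ← Complex.exp_conj, ← Complex.exp_add, Complex.exp_re,
      Complex.norm_exp, Complex.norm_exp, ← Real.exp_add, hre, him]
  -- the key norm lower bound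
  have hsum : ‖a‖ + c * ‖b‖ ≤ ‖a + b‖ := by
    have h2 : (‖a‖ + c * ‖b‖) ^ 2 ≤ ‖a + b‖ ^ 2 := by
      rw [Complex.sq_norm, Complex.normSq_add, ← Complex.sq_norm a, ← Complex.sq_norm b, hab]
      have h3 : c * (‖a‖ * ‖b‖)
          ≤ Real.cos (θ * (u.arg - v.arg)) * (‖a‖ * ‖b‖) :=
        mul_le_mul_of_nonneg_right hkey (by positivity)
      have h4 : c ^ 2 * ‖b‖ ^ 2 ≤ ‖b‖ ^ 2 := by
        nlinarith [mul_nonneg (mul_nonneg (sub_nonneg.mpr hc_le)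
          (by linarith : (0:ℝ) ≤ 1 + c)) (sq_nonneg (‖b‖))]
      nlinarith [h3, h4]
    calc ‖a‖ + c * ‖b‖
        = Real.sqrt ((‖a‖ + c * ‖b‖) ^ 2) := by
          rw [Real.sqrt_sq (by positivity)]
      _ ≤ Real.sqrt (‖a + b‖ ^ 2) := Real.sqrt_le_sqrt h2
      _ = ‖a + b‖ := Real.sqrt_sq (norm_nonneg _)
  have hS : 0 < ‖a + b‖ := by nlinarith
  have hab0 : a + b ≠ 0 := norm_ne_zero_iff.mp (ne_of_gt hS)
  have hφz : φ z = a / (a + b) := by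
    rw [hφ]
    simp only [lensMap, ← hu_def, ← hv_def, ← ha_def, ← hb_def]
    field_simp
    ring
  have h1φ : 1 - φ z = b / (a + b) := by
    rw [hφz]
    field_simp
    ring
  rw [h1φ, hφz, norm_div, norm_div]
  rw [div_le_iff₀ hS]
  have heq : 1 / c * (1 - ‖a‖ / ‖a + b‖) * ‖a + b‖
      = (‖a + b‖ - ‖a‖) / c := by
    field_simp
  rw [heq, le_div_iff₀ hc_pos]
  nlinarith
end

section
/- Let m ≥ 1 and let λ₁, …, λ_m be positive real numbers. For A > 0, let N_A be the number of m-tuples (n₁, …, n_m) of non-negative integers such that λ₁ n₁ + ⋯ + λ_m n_m ≤ A. Then N_A is asymptotically equivalent to A^m / ((λ₁ λ₂ ⋯ λ_m) · m!) as A → ∞; that is, N_A · (λ₁ ⋯ λ_m) · m! / A^m → 1 as A → ∞. -/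
open Filter Finset

-- aux: discrete MVT bounds
lemma aux_pow (n : ℕ) {a b : ℝ} (ha : 0 ≤ a) (hab : a ≤ b) :
    (n+1 : ℝ) * a ^ n * (b - a) ≤ b ^ (n+1) - a ^ (n+1) ∧
    b ^ (n+1) - a ^ (n+1) ≤ (n+1 : ℝ) * b ^ n * (b - a) := by
  have hb : 0 ≤ b := ha.trans hab
  have key := geom_sum₂_mul b a (n+1)
  simp only [Nat.add_sub_cancel] at key
  have h1 : ∀ i ∈ range (n+1), a ^ n ≤ b ^ i * a ^ (n - i) := by
    intro i hi
    have hi' : i ≤ n := Nat.lt_succ_iff.mp (mem_range.mp hi)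
    calc a ^ n = a ^ i * a ^ (n - i) := by rw [← pow_add]; congr 1; omega
    _ ≤ b ^ i * a ^ (n - i) := by
        have := pow_le_pow_left₀ ha hab i
        gcongr
  have h2 : ∀ i ∈ range (n+1), b ^ i * a ^ (n - i) ≤ b ^ n := by
    intro i hi
    have hi' : i ≤ n := Nat.lt_succ_iff.mp (mem_range.mp hi)
    calc b ^ i * a ^ (n - i) ≤ b ^ i * b ^ (n - i) := by
          have := pow_le_pow_left₀ ha hab (n-i)
          gcongr
    _ = b ^ n := by rw [← pow_add]; congr 1; omega
  have hs1 : (n+1 : ℝ) * a ^ n ≤ ∑ i ∈ range (n+1), b ^ i * a ^ (n - i) := by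
    calc (n+1 : ℝ) * a ^ n = ∑ _i ∈ range (n+1), a ^ n := by
          rw [Finset.sum_const, card_range]; push_cast; ring
    _ ≤ _ := Finset.sum_le_sum h1
  have hs2 : ∑ i ∈ range (n+1), b ^ i * a ^ (n - i) ≤ (n+1 : ℝ) * b ^ n := by
    calc (∑ i ∈ range (n+1), b ^ i * a ^ (n - i)) ≤ ∑ _i ∈ range (n+1), b ^ n :=
          Finset.sum_le_sum h2
    _ = (n+1 : ℝ) * b ^ n := by rw [Finset.sum_const, card_range]; push_cast; ring
  have hba : 0 ≤ b - a := sub_nonneg.mpr hab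
  refine ⟨?_, ?_⟩
  · rw [← key]
    exact mul_le_mul_of_nonneg_right hs1 hba
  · rw [← key]
    exact mul_le_mul_of_nonneg_right hs2 hba

lemma finite_sol (m : ℕ) (lam : Fin m → ℝ) (hlam : ∀ k, 0 < lam k) (A : ℝ) :
    Finite {n : Fin m → ℕ // (∑ k, lam k * n k) ≤ A} := by
  apply Finite.of_injective
    (fun n : {n : Fin m → ℕ // (∑ k, lam k * n k) ≤ A} =>
      (fun k => (⟨min (n.1 k) (⌊A / lam k⌋₊), by omega⟩ : Fin (⌊A / lam k⌋₊ + 1))))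
  intro n n' h
  have hb : ∀ (n : {n : Fin m → ℕ // (∑ k, lam k * n k) ≤ A}) k, n.1 k ≤ ⌊A / lam k⌋₊ := by
    intro n k
    apply Nat.le_floor
    rw [le_div_iff₀ (hlam k)]
    calc (n.1 k : ℝ) * lam k = lam k * n.1 k := by ring
    _ ≤ ∑ j, lam j * n.1 j := by
        apply Finset.single_le_sum (f := fun j => lam j * (n.1 j : ℝ)) _ (Finset.mem_univ k)
        intro j _
        exact mul_nonneg (hlam j).le (Nat.cast_nonneg _)
    _ ≤ A := n.2
  ext k
  have := congrFun h k
  simp only [Fin.mk.injEq] at this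
  have h1 := hb n k
  have h2 := hb n' k
  omega

lemma card_succ (m : ℕ) (lam : Fin (m+1) → ℝ) (hlam : ∀ k, 0 < lam k) (A : ℝ) :
    (Nat.card {n : Fin (m+1) → ℕ // (∑ k, lam k * n k) ≤ A}) =
    ∑ j ∈ range (⌊A / lam 0⌋₊ + 1),
      Nat.card {n' : Fin m → ℕ // (∑ k, lam k.succ * n' k) ≤ A - lam 0 * j} := by
  set J := ⌊A / lam 0⌋₊ with hJ
  have hb : ∀ (n : {n : Fin (m+1) → ℕ // (∑ k, lam k * n k) ≤ A}), n.1 0 < J + 1 := by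
    intro n
    have : n.1 0 ≤ J := by
      apply Nat.le_floor
      rw [le_div_iff₀ (hlam 0)]
      calc (n.1 0 : ℝ) * lam 0 = lam 0 * n.1 0 := by ring
      _ ≤ ∑ j, lam j * n.1 j := by
          apply Finset.single_le_sum (f := fun j => lam j * (n.1 j : ℝ)) _ (Finset.mem_univ 0)
          intro j _
          exact mul_nonneg (hlam j).le (Nat.cast_nonneg _)
      _ ≤ A := n.2
    omega
  have e : {n : Fin (m+1) → ℕ // (∑ k, lam k * n k) ≤ A} ≃
      Σ j : Fin (J+1), {n' : Fin m → ℕ // (∑ k, lam k.succ * n' k) ≤ A - lam 0 * (j : ℕ)} := by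
    refine ⟨fun n => ⟨⟨n.1 0, hb n⟩, ⟨fun k => n.1 k.succ, ?_⟩⟩,
           fun p => ⟨Fin.cons p.1.1 p.2.1, ?_⟩, ?_, ?_⟩
    · have h := n.2
      rw [Fin.sum_univ_succ] at h
      simpa using by linarith
    · rw [Fin.sum_univ_succ]
      simp only [Fin.cons_zero, Fin.cons_succ]
      have h := p.2.2
      linarith
    · intro n
      apply Subtype.ext
      exact Fin.cons_self_tail n.1
    · rintro ⟨⟨j, hj⟩, ⟨n', hn'⟩⟩
      rfl
  rw [Nat.card_congr e]
  letI : ∀ j : Fin (J+1), Fintype {n' : Fin m → ℕ // (∑ k, lam k.succ * n' k) ≤ A - lam 0 * (j : ℕ)} :=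
    fun j => @Fintype.ofFinite _ (finite_sol m (fun k => lam k.succ) (fun k => hlam k.succ) _)
  rw [Nat.card_eq_fintype_card, Fintype.card_sigma]
  simp only [← Nat.card_eq_fintype_card]
  exact Fin.sum_univ_eq_sum_range
    (fun j => Nat.card {n' : Fin m → ℕ // (∑ k, lam k.succ * n' k) ≤ A - lam 0 * j}) (J+1)

set_option maxHeartbeats 1000000 in
lemma key_bounds : ∀ (m : ℕ) (lam : Fin m → ℝ), (∀ k, 0 < lam k) → ∀ A : ℝ, 0 ≤ A →
    A ^ m ≤ (Nat.card {n : Fin m → ℕ // (∑ k, lam k * n k) ≤ A} : ℝ) * m.factorial * ∏ k, lam k ∧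
    (Nat.card {n : Fin m → ℕ // (∑ k, lam k * n k) ≤ A} : ℝ) * m.factorial * ∏ k, lam k
      ≤ (A + ∑ k, lam k) ^ m := by
  intro m
  induction m with
  | zero =>
    intro lam hlam A hA
    haveI : Unique {n : Fin 0 → ℕ // (∑ k, lam k * n k) ≤ A} :=
      ⟨⟨⟨fun k => 0, by simpa using hA⟩⟩, fun a => Subtype.ext (funext fun k => k.elim0)⟩
    rw [Nat.card_unique]
    norm_num
  | succ m ih =>
    intro lam hlam A hA
    have hL : 0 < lam 0 := hlam 0
    set L := lam 0 with hLdef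
    set J := ⌊A / L⌋₊ with hJdef
    have hJle : (J : ℝ) ≤ A / L := Nat.floor_le (div_nonneg hA hL.le)
    have hJA : (J : ℝ) * L ≤ A := by
      rw [← le_div_iff₀ hL]; exact hJle
    have hAj : ∀ j ∈ range (J+1), 0 ≤ A - L * j := by
      intro j hj
      have hjJ : (j : ℝ) ≤ J := by
        have := Nat.lt_succ_iff.mp (mem_range.mp hj)
        exact_mod_cast this
      nlinarith
    have hrec := card_succ m lam hlam A
    set N' : ℕ → ℕ := fun j => Nat.card {n' : Fin m → ℕ // (∑ k, lam k.succ * n' k) ≤ A - L * j}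
      with hN'def
    have hrecR : (Nat.card {n : Fin (m+1) → ℕ // (∑ k, lam k * n k) ≤ A} : ℝ)
        = ∑ j ∈ range (J+1), (N' j : ℝ) := by
      rw [hrec]; push_cast; rfl
    have IH := fun (j : ℕ) (hj : j ∈ range (J+1)) =>
      ih (fun k => lam k.succ) (fun k => hlam k.succ) (A - L * j) (hAj j hj)
    set S' := ∑ k : Fin m, lam k.succ with hS'def
    set P' := ∏ k : Fin m, lam k.succ with hP'def
    have hS' : 0 ≤ S' := Finset.sum_nonneg fun k _ => (hlam k.succ).le
    have hP' : 0 < P' := Finset.prod_pos fun k _ => hlam k.succ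
    have hprod : ∏ k : Fin (m+1), lam k = L * P' := Fin.prod_univ_succ lam
    have hsum : ∑ k : Fin (m+1), lam k = L + S' := Fin.sum_univ_succ lam
    have hfact : ((m+1).factorial : ℝ) = (m+1) * m.factorial := by
      rw [Nat.factorial_succ]; push_cast; ring
    have hmain : (Nat.card {n : Fin (m+1) → ℕ // (∑ k, lam k * n k) ≤ A} : ℝ)
        * (m+1).factorial * ∏ k, lam k
        = ∑ j ∈ range (J+1), ((m:ℝ)+1) * L * ((N' j : ℝ) * m.factorial * P') := by
      rw [hrecR, hprod, hfact, Finset.sum_mul, Finset.sum_mul]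
      apply Finset.sum_congr rfl
      intro j _
      ring
    -- telescoping lower bound
    have tel_low : A ^ (m+1) ≤ ∑ j ∈ range (J+1), ((m:ℝ)+1) * L * (A - L * j) ^ m := by
      set c : ℕ → ℝ := fun j => (max (A - L * j) 0) ^ (m+1) with hcdef
      have htel := Finset.sum_range_sub' c (J+1)
      have hc0 : c 0 = A ^ (m+1) := by
        simp only [hcdef, Nat.cast_zero, mul_zero, sub_zero, max_eq_left hA]
      have hcJ : c (J+1) = 0 := by
        have h1 : A / L < (J : ℝ) + 1 := Nat.lt_floor_add_one _
        have h2 : A - L * ((J+1 : ℕ) : ℝ) ≤ 0 := by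
          rw [div_lt_iff₀ hL] at h1
          push_cast
          nlinarith
        simp only [hcdef]
        rw [max_eq_right h2, zero_pow (Nat.succ_ne_zero m)]
      have hterm : ∀ j ∈ range (J+1), c j - c (j+1) ≤ ((m:ℝ)+1) * L * (A - L * j) ^ m := by
        intro j hj
        have hbj : 0 ≤ A - L * j := hAj j hj
        set a : ℝ := max (A - L * ((j+1 : ℕ) : ℝ)) 0 with hadef
        have ha : 0 ≤ a := le_max_right _ _
        have hab : a ≤ A - L * j := max_le (by push_cast; nlinarith) hbj
        have hba : (A - L * j) - a ≤ L := by
          have h5 : A - L * ((j+1 : ℕ) : ℝ) ≤ a := le_max_left _ _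
          push_cast at h5
          nlinarith
        have h2 := (aux_pow m ha hab).2
        have hc1 : c j = (A - L * j) ^ (m+1) := by
          simp only [hcdef, max_eq_left hbj]
        have hc2 : c (j+1) = a ^ (m+1) := by
          simp only [hcdef, hadef]
        rw [hc1, hc2]
        have hbpow : 0 ≤ (A - L * j) ^ m := pow_nonneg hbj m
        have h4 : ((m:ℝ)+1) * (A - L * j) ^ m * ((A - L * j) - a)
            ≤ ((m:ℝ)+1) * (A - L * j) ^ m * L :=
          mul_le_mul_of_nonneg_left hba (mul_nonneg (by positivity) hbpow)
        linarith
      calc A ^ (m+1) = c 0 - c (J+1) := by rw [hc0, hcJ]; ring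
        _ = ∑ j ∈ range (J+1), (c j - c (j+1)) := htel.symm
        _ ≤ _ := Finset.sum_le_sum hterm
    -- telescoping upper bound
    have tel_up : ∑ j ∈ range (J+1), ((m:ℝ)+1) * L * ((A - L * j) + S') ^ m
        ≤ (A + (L + S')) ^ (m+1) := by
      set d : ℕ → ℝ := fun j => (A + S' + L - L * j) ^ (m+1) with hddef
      have htel := Finset.sum_range_sub' d (J+1)
      have hterm : ∀ j ∈ range (J+1), ((m:ℝ)+1) * L * ((A - L * j) + S') ^ m
          ≤ d j - d (j+1) := by
        intro j hj
        have hbj : 0 ≤ A - L * j := hAj j hj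
        have ha : 0 ≤ (A - L * j) + S' := by linarith
        have hab : (A - L * j) + S' ≤ A + S' + L - L * j := by linarith
        have h1 := (aux_pow m ha hab).1
        have hd1 : d j = (A + S' + L - L * j) ^ (m+1) := rfl
        have hd2 : d (j+1) = ((A - L * j) + S') ^ (m+1) := by
          simp only [hddef]
          rw [show A + S' + L - L * ((j+1 : ℕ) : ℝ) = (A - L * j) + S' from by push_cast; ring]
        rw [hd1, hd2]
        linarith
      have hdJ : 0 ≤ d (J+1) := by
        have h6 : 0 ≤ A + S' + L - L * ((J+1 : ℕ) : ℝ) := by push_cast; nlinarith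
        simp only [hddef]
        exact pow_nonneg h6 _
      calc ∑ j ∈ range (J+1), ((m:ℝ)+1) * L * ((A - L * j) + S') ^ m
          ≤ ∑ j ∈ range (J+1), (d j - d (j+1)) := Finset.sum_le_sum hterm
        _ = d 0 - d (J+1) := htel
        _ ≤ d 0 := by linarith
        _ = (A + (L + S')) ^ (m+1) := by
            simp only [hddef]
            rw [show A + S' + L - L * ((0 : ℕ) : ℝ) = A + (L + S') from by push_cast; ring]
    constructor
    · rw [hmain]
      refine tel_low.trans (Finset.sum_le_sum fun j hj => ?_)
      have := (IH j hj).1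
      have hpos : 0 ≤ ((m:ℝ)+1) * L := by positivity
      calc ((m:ℝ)+1) * L * (A - L * j) ^ m
          ≤ ((m:ℝ)+1) * L * ((N' j : ℝ) * m.factorial * P') :=
            mul_le_mul_of_nonneg_left this hpos
        _ = _ := rfl
    · rw [hmain, hsum]
      refine le_trans (Finset.sum_le_sum fun j hj => ?_) tel_up
      have := (IH j hj).2
      have hpos : 0 ≤ ((m:ℝ)+1) * L := by positivity
      exact mul_le_mul_of_nonneg_left this hpos

/-- For positive reals `λ₁, …, λ_m`, the number `N_A` of `m`-tuples of
non-negative integers with `Σ λ_k n_k ≤ A` satisfies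
`N_A ∼ A^m / ((λ₁⋯λ_m) m!)` as `A → ∞`. -/
theorem lattice_point_count_asymptotic (m : ℕ) (hm : 1 ≤ m)
    (lam : Fin m → ℝ) (hlam : ∀ k, 0 < lam k) :
    Tendsto (fun A : ℝ =>
        (Nat.card {n : Fin m → ℕ // (∑ k, lam k * n k) ≤ A} : ℝ) *
          (∏ k, lam k) * (Nat.factorial m) / A ^ m)
      atTop (nhds 1) := by
  set S := ∑ k, lam k with hSdef
  have hS : 0 ≤ S := Finset.sum_nonneg fun k _ => (hlam k).le
  have hup : Tendsto (fun A : ℝ => (1 + S / A) ^ m) atTop (nhds 1) := by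
    have h1 : Tendsto (fun A : ℝ => 1 + S / A) atTop (nhds 1) := by
      have := (tendsto_inv_atTop_zero.const_mul S).const_add (1 : ℝ)
      simpa [div_eq_mul_inv] using this
    simpa using h1.pow m
  refine tendsto_of_tendsto_of_tendsto_of_le_of_le' tendsto_const_nhds hup ?_ ?_
  · filter_upwards [eventually_gt_atTop (0 : ℝ)] with A hA
    have hkey := (key_bounds m lam hlam A hA.le).1
    rw [le_div_iff₀ (by positivity : (0:ℝ) < A ^ m)]
    calc (1:ℝ) * A ^ m = A ^ m := by ring
    _ ≤ (Nat.card {n : Fin m → ℕ // (∑ k, lam k * n k) ≤ A} : ℝ) * m.factorial * ∏ k, lam k :=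
        hkey
    _ = (Nat.card {n : Fin m → ℕ // (∑ k, lam k * n k) ≤ A} : ℝ) * (∏ k, lam k) * m.factorial :=
        by ring
  · filter_upwards [eventually_gt_atTop (0 : ℝ)] with A hA
    have hkey := (key_bounds m lam hlam A hA.le).2
    rw [div_le_iff₀ (by positivity : (0:ℝ) < A ^ m)]
    calc (Nat.card {n : Fin m → ℕ // (∑ k, lam k * n k) ≤ A} : ℝ) * (∏ k, lam k) * m.factorial
        = (Nat.card {n : Fin m → ℕ // (∑ k, lam k * n k) ≤ A} : ℝ) * m.factorial * ∏ k, lam k :=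
        by ring
    _ ≤ (A + S) ^ m := hkey
    _ = (1 + S / A) ^ m * A ^ m := by
        rw [← mul_pow]
        congr 1
        field_simp
end

section
/- Let θ ∈ (0, 1) and let m_θ be the pull-back (pushforward) of the normalized Lebesgue measure on the unit circle under the boundary map ξ ↦ λ_θ(ξ), where λ_θ extends continuously to the closed unit disk. Then there exist constants c, C > 0 such that for every h ∈ (0, 1], c · h^{1/θ} ≤ m_θ({z ∈ ℂ : |z − 1| ≤ h}) ≤ C · h^{1/θ}. -/
open MeasureTheory

/-- The pull-back measure `m_θ` on `ℂ`: the image of the normalized Lebesgue measure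
of the unit circle (i.e. `(2π)⁻¹ dt` on `[0, 2π)`) under `t ↦ λ_θ(e^{it})`. -/
noncomputable def lensPullback (θ : ℝ) : Measure ℂ :=
  Measure.map (fun t : ℝ => lensMap θ (Complex.exp (Complex.I * t)))
    ((ENNReal.ofReal (2 * Real.pi))⁻¹ • volume.restrict (Set.Ico 0 (2 * Real.pi)))

section LensAux

open Complex Real

lemma lensAux_measurable_cpow_const (c : ℂ) : Measurable fun z : ℂ => z ^ c := by
  have h : (fun z : ℂ => z ^ c) =
      fun z => if z = 0 then (if c = 0 then 1 else 0) else Complex.exp (Complex.log z * c) := by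
    funext z; rw [Complex.cpow_def]
  rw [h]
  exact Measurable.ite (measurableSet_eq_fun measurable_id measurable_const)
    measurable_const (Complex.measurable_exp.comp (Complex.measurable_log.mul_const c))

lemma lensAux_denom_ne_zero {θ : ℝ} (h0 : 0 < θ) (h1 : θ < 1) {z : ℂ}
    (h1z : 0 ≤ (1 + z).re) (h2z : 0 ≤ (1 - z).re) :
    (1 + z) ^ (θ : ℂ) + (1 - z) ^ (θ : ℂ) ≠ 0 := by
  have re_cpow_pos : ∀ w : ℂ, 0 ≤ w.re → w ≠ 0 → 0 < (w ^ (θ : ℂ)).re := by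
    intro w hw hw0
    rw [Complex.cpow_def_of_ne_zero hw0, Complex.exp_re]
    have him : (Complex.log w * (θ : ℂ)).im = w.arg * θ := by
      simp [Complex.mul_im, Complex.log_im]
    rw [him]
    have harg : |w.arg| ≤ π / 2 := Complex.abs_arg_le_pi_div_two_iff.mpr hw
    have hpi := Real.pi_pos
    have habs : |w.arg * θ| < π / 2 := by
      rw [abs_mul, abs_of_pos h0]; nlinarith [abs_nonneg w.arg]
    have hcos : 0 < Real.cos (w.arg * θ) :=
      Real.cos_pos_of_mem_Ioo ⟨by linarith [(abs_lt.mp habs).1], (abs_lt.mp habs).2⟩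
    positivity
  have re_cpow_nonneg : ∀ w : ℂ, 0 ≤ w.re → 0 ≤ (w ^ (θ : ℂ)).re := by
    intro w hw
    rcases eq_or_ne w 0 with rfl | hw0
    · rw [Complex.zero_cpow (by exact_mod_cast h0.ne')]; simp
    · exact (re_cpow_pos w hw hw0).le
  have hre : 0 < ((1 + z) ^ (θ : ℂ) + (1 - z) ^ (θ : ℂ)).re := by
    rw [Complex.add_re]
    rcases eq_or_ne (1 + z) 0 with hz | hz
    · have hz' : z = -1 := by linear_combination hz
      have h2 : (1 : ℂ) - z ≠ 0 := by rw [hz']; norm_num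
      linarith [re_cpow_pos _ h2z h2, re_cpow_nonneg _ h1z]
    · linarith [re_cpow_pos _ h1z hz, re_cpow_nonneg _ h2z]
  intro h; rw [h] at hre; simp at hre

lemma lensAux_abs_lensMap_sub_one (θ : ℝ) {z : ℂ}
    (hD : (1 + z) ^ (θ : ℂ) + (1 - z) ^ (θ : ℂ) ≠ 0) :
    ‖lensMap θ z - 1‖ =
      2 * ‖1 - z‖ ^ θ /
        ‖(1 + z) ^ (θ : ℂ) + (1 - z) ^ (θ : ℂ)‖ := by
  have key : lensMap θ z - 1 =
      -2 * (1 - z) ^ (θ : ℂ) / ((1 + z) ^ (θ : ℂ) + (1 - z) ^ (θ : ℂ)) := by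
    unfold lensMap; field_simp; ring
  rw [key, norm_div, norm_mul, Complex.norm_cpow_real]
  norm_num

lemma lensAux_abs_one_sub_exp (t : ℝ) (h0 : 0 ≤ t) (h2 : t ≤ 2 * π) :
    ‖1 - Complex.exp (t * Complex.I)‖ = 2 * Real.sin (t / 2) := by
  have hpi := Real.pi_pos
  have hs : 0 ≤ Real.sin (t / 2) :=
    Real.sin_nonneg_of_nonneg_of_le_pi (by linarith) (by linarith)
  have hsq : (‖1 - Complex.exp (t * Complex.I)‖) ^ 2
      = (2 * Real.sin (t / 2)) ^ 2 := by
    rw [Complex.sq_norm, Complex.normSq_apply]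
    simp only [Complex.sub_re, Complex.sub_im, Complex.one_re, Complex.one_im,
      Complex.exp_ofReal_mul_I_re, Complex.exp_ofReal_mul_I_im]
    have h1 := Real.sin_sq_eq_half_sub (t / 2)
    have h2 := Real.sin_sq_add_cos_sq t
    have h3 : 2 * (t / 2) = t := by ring
    rw [h3] at h1
    nlinarith
  calc ‖1 - Complex.exp (t * Complex.I)‖
      = Real.sqrt ((‖1 - Complex.exp (t * Complex.I)‖) ^ 2) :=
        (Real.sqrt_sq (by positivity)).symm
    _ = Real.sqrt ((2 * Real.sin (t / 2)) ^ 2) := by rw [hsq]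
    _ = 2 * Real.sin (t / 2) := Real.sqrt_sq (by positivity)

lemma lensAux_sqrt_three_le (t : ℝ) (h0 : 0 ≤ t) (h3 : t ≤ π / 3) :
    Real.sqrt 3 ≤ ‖1 + Complex.exp (t * Complex.I)‖ := by
  have hpi := Real.pi_pos
  have hcos : (1:ℝ) / 2 ≤ Real.cos t := by
    have := Real.cos_le_cos_of_nonneg_of_le_pi h0 (by linarith) h3
    rwa [Real.cos_pi_div_three] at this
  have hsq : (3:ℝ) ≤ (‖1 + Complex.exp (t * Complex.I)‖) ^ 2 := by
    rw [Complex.sq_norm, Complex.normSq_apply]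
    simp only [Complex.add_re, Complex.add_im, Complex.one_re, Complex.one_im,
      Complex.exp_ofReal_mul_I_re, Complex.exp_ofReal_mul_I_im]
    nlinarith [Real.sin_sq_add_cos_sq t]
  calc Real.sqrt 3 ≤ Real.sqrt ((‖1 + Complex.exp (t * Complex.I)‖) ^ 2) :=
        Real.sqrt_le_sqrt hsq
    _ = _ := Real.sqrt_sq (by positivity)

lemma lensAux_re_one_add_exp (t : ℝ) : 0 ≤ (1 + Complex.exp (t * Complex.I)).re := by
  simp only [Complex.add_re, Complex.one_re, Complex.exp_ofReal_mul_I_re]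
  linarith [Real.neg_one_le_cos t]

lemma lensAux_re_one_sub_exp (t : ℝ) : 0 ≤ (1 - Complex.exp (t * Complex.I)).re := by
  simp only [Complex.sub_re, Complex.one_re, Complex.exp_ofReal_mul_I_re]
  linarith [Real.cos_le_one t]

/-- Lower bound on `|λ_θ(e^{it}) - 1|`, valid for `t ∈ [0, 2π]`. -/
lemma lensAux_lower (θ : ℝ) (h0 : 0 < θ) (h1 : θ < 1) (t : ℝ) (ht0 : 0 ≤ t) (ht2 : t ≤ 2 * π) :
    Real.sin (t / 2) ^ θ ≤ ‖lensMap θ (Complex.exp (t * Complex.I)) - 1‖ := by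
  set z := Complex.exp (t * Complex.I) with hz
  have hD : (1 + z) ^ (θ : ℂ) + (1 - z) ^ (θ : ℂ) ≠ 0 :=
    lensAux_denom_ne_zero h0 h1 (lensAux_re_one_add_exp t) (lensAux_re_one_sub_exp t)
  have hDpos : 0 < ‖(1 + z) ^ (θ : ℂ) + (1 - z) ^ (θ : ℂ)‖ :=
    norm_pos_iff.mpr hD
  rw [lensAux_abs_lensMap_sub_one θ hD, lensAux_abs_one_sub_exp t ht0 ht2]
  have hs : 0 ≤ Real.sin (t / 2) :=
    Real.sin_nonneg_of_nonneg_of_le_pi (by linarith) (by linarith [Real.pi_pos])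
  have hDle : ‖(1 + z) ^ (θ : ℂ) + (1 - z) ^ (θ : ℂ)‖ ≤ 2 * (2 : ℝ) ^ θ := by
    have h1a : ‖(1 + z) ^ (θ : ℂ)‖ ≤ (2 : ℝ) ^ θ := by
      rw [Complex.norm_cpow_real]
      refine Real.rpow_le_rpow (norm_nonneg _) ?_ h0.le
      calc ‖1 + z‖ ≤ ‖(1:ℂ)‖ + ‖z‖ := norm_add_le _ _
        _ = 2 := by rw [hz]; simp [Complex.norm_exp_ofReal_mul_I]; norm_num
    have h1b : ‖(1 - z) ^ (θ : ℂ)‖ ≤ (2 : ℝ) ^ θ := by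
      rw [Complex.norm_cpow_real, lensAux_abs_one_sub_exp t ht0 ht2]
      refine Real.rpow_le_rpow (by positivity) ?_ h0.le
      linarith [Real.sin_le_one (t / 2)]
    calc ‖(1 + z) ^ (θ : ℂ) + (1 - z) ^ (θ : ℂ)‖
        ≤ ‖(1 + z) ^ (θ : ℂ)‖ + ‖(1 - z) ^ (θ : ℂ)‖ :=
          norm_add_le _ _
      _ ≤ 2 * (2 : ℝ) ^ θ := by linarith
  have hnum : (2 * Real.sin (t / 2)) ^ θ = (2 : ℝ) ^ θ * Real.sin (t / 2) ^ θ :=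
    Real.mul_rpow (by norm_num) hs
  calc Real.sin (t / 2) ^ θ
      = 2 * ((2 : ℝ) ^ θ * Real.sin (t / 2) ^ θ) / (2 * (2 : ℝ) ^ θ) := by
        field_simp
    _ = 2 * (2 * Real.sin (t / 2)) ^ θ / (2 * (2 : ℝ) ^ θ) := by rw [hnum]
    _ ≤ 2 * (2 * Real.sin (t / 2)) ^ θ /
          ‖(1 + z) ^ (θ : ℂ) + (1 - z) ^ (θ : ℂ)‖ := by
        apply div_le_div_of_nonneg_left (by positivity) hDpos hDle

/-- Upper bound on `|λ_θ(e^{it}) - 1|`, valid for `t ∈ [0, 1]`. -/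
lemma lensAux_upper (θ : ℝ) (h0 : 0 < θ) (h1 : θ < 1) (t : ℝ) (ht0 : 0 ≤ t) (ht1 : t ≤ 1) :
    ‖lensMap θ (Complex.exp (t * Complex.I)) - 1‖ ≤
      2 * t ^ θ / (Real.sqrt 3 ^ θ - 1) := by
  have hpi3 := Real.pi_gt_three
  set z := Complex.exp (t * Complex.I) with hz
  have hD : (1 + z) ^ (θ : ℂ) + (1 - z) ^ (θ : ℂ) ≠ 0 :=
    lensAux_denom_ne_zero h0 h1 (lensAux_re_one_add_exp t) (lensAux_re_one_sub_exp t)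
  have hsqrt3 : (1:ℝ) < Real.sqrt 3 := by
    nlinarith [Real.sq_sqrt (by norm_num : (0:ℝ) ≤ 3), Real.sqrt_nonneg 3]
  have hd : 0 < Real.sqrt 3 ^ θ - 1 := by
    have : (1:ℝ) < Real.sqrt 3 ^ θ :=
      (Real.one_lt_rpow_iff_of_pos (by linarith)).mpr (Or.inl ⟨hsqrt3, h0⟩)
    linarith
  have hs : 0 ≤ Real.sin (t / 2) :=
    Real.sin_nonneg_of_nonneg_of_le_pi (by linarith) (by linarith)
  have hsin : 2 * Real.sin (t / 2) ≤ t := by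
    have := Real.sin_le (by linarith : (0:ℝ) ≤ t / 2)
    linarith
  have hB : ‖1 - z‖ ^ θ ≤ t ^ θ := by
    rw [lensAux_abs_one_sub_exp t ht0 (by linarith)]
    exact Real.rpow_le_rpow (by positivity) hsin h0.le
  have hBle1 : ‖1 - z‖ ^ θ ≤ 1 :=
    hB.trans (Real.rpow_le_one ht0 ht1 h0.le)
  have hA : Real.sqrt 3 ^ θ ≤ ‖(1 + z) ^ (θ : ℂ)‖ := by
    rw [Complex.norm_cpow_real]
    exact Real.rpow_le_rpow (Real.sqrt_nonneg 3)
      (lensAux_sqrt_three_le t ht0 (by linarith)) h0.le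
  have hDge : Real.sqrt 3 ^ θ - 1 ≤
      ‖(1 + z) ^ (θ : ℂ) + (1 - z) ^ (θ : ℂ)‖ := by
    have key : ‖(1 + z) ^ (θ : ℂ)‖ - ‖(1 - z) ^ (θ : ℂ)‖ ≤
        ‖(1 + z) ^ (θ : ℂ) + (1 - z) ^ (θ : ℂ)‖ := by
      have := norm_sub_norm_le ((1 + z) ^ (θ : ℂ)) (-((1 - z) ^ (θ : ℂ)))
      simpa [sub_neg_eq_add] using this
    have hBabs : ‖(1 - z) ^ (θ : ℂ)‖ ≤ 1 := by
      rw [Complex.norm_cpow_real]; exact hBle1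
    linarith
  rw [lensAux_abs_lensMap_sub_one θ hD]
  exact div_le_div₀ (by positivity) (by nlinarith [norm_nonneg (1 - z)]) hd hDge

end LensAux

/-- For `θ ∈ (0,1)` there are `c, C > 0` such that for every
`h ∈ (0, 1]`, `c h^{1/θ} ≤ m_θ({z : |z - 1| ≤ h}) ≤ C h^{1/θ}`. -/
theorem lensPullback_window_estimate (θ : ℝ) (hθ : θ ∈ Set.Ioo (0 : ℝ) 1) :
    ∃ c > (0 : ℝ), ∃ C > (0 : ℝ), ∀ h : ℝ, 0 < h → h ≤ 1 →
      ENNReal.ofReal (c * h ^ (1 / θ)) ≤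
          lensPullback θ {z : ℂ | ‖z - 1‖ ≤ h} ∧
        lensPullback θ {z : ℂ | ‖z - 1‖ ≤ h} ≤
          ENNReal.ofReal (C * h ^ (1 / θ)) := by
  obtain ⟨h0, h1⟩ := hθ
  have hpi := Real.pi_pos
  have hpi3 := Real.pi_gt_three
  set π := Real.pi
  -- the denominator constant
  set d : ℝ := Real.sqrt 3 ^ θ - 1 with hd_def
  have hsqrt3 : (1:ℝ) < Real.sqrt 3 := by
    nlinarith [Real.sq_sqrt (by norm_num : (0:ℝ) ≤ 3), Real.sqrt_nonneg 3]
  have hd : 0 < d := by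
    have : (1:ℝ) < Real.sqrt 3 ^ θ :=
      (Real.one_lt_rpow_iff_of_pos (by linarith)).mpr (Or.inl ⟨hsqrt3, h0⟩)
    simp only [hd_def]; linarith
  have hdle : d ≤ 1 := by
    have h3le : Real.sqrt 3 ≤ 2 := by
      nlinarith [Real.sq_sqrt (by norm_num : (0:ℝ) ≤ 3), Real.sqrt_nonneg 3]
    have : Real.sqrt 3 ^ θ ≤ Real.sqrt 3 ^ (1:ℝ) :=
      Real.rpow_le_rpow_of_exponent_le hsqrt3.le h1.le
    rw [Real.rpow_one] at this
    simp only [hd_def]; nlinarith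
  refine ⟨(2 * π)⁻¹ * (d / 2) ^ (1 / θ), by positivity, 1, one_pos, fun h hh0 hh1 => ?_⟩
  -- basic measurability
  set f : ℝ → ℂ := fun t => lensMap θ (Complex.exp (Complex.I * t)) with hf_def
  have hzmeas : Measurable fun t : ℝ => Complex.exp (Complex.I * (t:ℂ)) :=
    (Complex.continuous_exp.comp (continuous_const.mul Complex.continuous_ofReal)).measurable
  have hAmeas : Measurable fun t : ℝ => (1 + Complex.exp (Complex.I * (t:ℂ))) ^ (θ:ℂ) :=
    (lensAux_measurable_cpow_const _).comp (measurable_const.add hzmeas)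
  have hBmeas : Measurable fun t : ℝ => (1 - Complex.exp (Complex.I * (t:ℂ))) ^ (θ:ℂ) :=
    (lensAux_measurable_cpow_const _).comp (measurable_const.sub hzmeas)
  have hf : Measurable f := (hAmeas.sub hBmeas).div (hAmeas.add hBmeas)
  set S : Set ℂ := {z : ℂ | ‖z - 1‖ ≤ h} with hS_def
  have hS : MeasurableSet S :=
    (isClosed_le (continuous_norm.comp (continuous_id.sub continuous_const))
      continuous_const).measurableSet
  have hmap : lensPullback θ S =
      (ENNReal.ofReal (2 * π))⁻¹ * volume (f ⁻¹' S ∩ Set.Ico 0 (2 * π)) := by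
    rw [lensPullback, Measure.map_apply hf hS, Measure.smul_apply,
      Measure.restrict_apply (hf hS), smul_eq_mul]
  -- rewrite `I * t` as `t * I`
  have hcomm : ∀ t : ℝ, Complex.I * (t : ℂ) = (t : ℂ) * Complex.I := fun t => mul_comm _ _
  have hmem : ∀ t : ℝ, t ∈ f ⁻¹' S ↔
      ‖lensMap θ (Complex.exp ((t:ℂ) * Complex.I)) - 1‖ ≤ h := by
    intro t
    simp only [hf_def, hS_def, Set.mem_preimage, Set.mem_setOf_eq, hcomm t]
  have hhinv : 0 ≤ h ^ (1 / θ) := Real.rpow_nonneg hh0.le _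
  have hhinv1 : h ^ (1 / θ) ≤ 1 := Real.rpow_le_one hh0.le hh1 (by positivity)
  constructor
  · -- LOWER BOUND
    set b : ℝ := (d / 2 * h) ^ (1 / θ) with hb_def
    have hb0 : 0 ≤ b := Real.rpow_nonneg (by positivity) _
    have hb1 : b ≤ 1 :=
      Real.rpow_le_one (by positivity) (by nlinarith) (by positivity)
    have hbpow : b ^ θ = d / 2 * h := by
      rw [hb_def, ← Real.rpow_mul (by positivity), one_div,
        inv_mul_cancel₀ h0.ne', Real.rpow_one]
    have hsub : Set.Icc 0 b ⊆ f ⁻¹' S ∩ Set.Ico 0 (2 * π) := by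
      intro t ⟨ht0, htb⟩
      have ht1 : t ≤ 1 := htb.trans hb1
      refine ⟨(hmem t).mpr ?_, ht0, by nlinarith⟩
      have key := lensAux_upper θ h0 h1 t ht0 ht1
      have htθ : t ^ θ ≤ d / 2 * h := by
        calc t ^ θ ≤ b ^ θ := Real.rpow_le_rpow ht0 htb h0.le
          _ = d / 2 * h := hbpow
      calc ‖lensMap θ (Complex.exp ((t:ℂ) * Complex.I)) - 1‖
          ≤ 2 * t ^ θ / d := key
        _ ≤ h := by rw [div_le_iff₀ hd]; nlinarith
    have hceq : (2 * π)⁻¹ * (d / 2) ^ (1 / θ) * h ^ (1 / θ) = (2 * π)⁻¹ * b := by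
      rw [hb_def, Real.mul_rpow (by positivity) hh0.le]; ring
    calc ENNReal.ofReal ((2 * π)⁻¹ * (d / 2) ^ (1 / θ) * h ^ (1 / θ))
        = ENNReal.ofReal ((2 * π)⁻¹ * b) := by rw [hceq]
      _ = (ENNReal.ofReal (2 * π))⁻¹ * ENNReal.ofReal b := by
          rw [ENNReal.ofReal_mul (by positivity), ENNReal.ofReal_inv_of_pos (by positivity)]
      _ = (ENNReal.ofReal (2 * π))⁻¹ * volume (Set.Icc 0 b) := by
          rw [Real.volume_Icc, sub_zero]
      _ ≤ (ENNReal.ofReal (2 * π))⁻¹ * volume (f ⁻¹' S ∩ Set.Ico 0 (2 * π)) :=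
          mul_le_mul_right (measure_mono hsub) _
      _ = lensPullback θ S := hmap.symm
  · -- UPPER BOUND
    set a : ℝ := π * h ^ (1 / θ) with ha_def
    have ha0 : 0 ≤ a := by positivity
    have hsub : f ⁻¹' S ∩ Set.Ico 0 (2 * π) ⊆
        Set.Icc 0 a ∪ Set.Icc (2 * π - a) (2 * π) := by
      rintro t ⟨htS, ht0, ht2⟩
      have hkey := lensAux_lower θ h0 h1 t ht0 ht2.le
      have hsh : Real.sin (t / 2) ^ θ ≤ h := hkey.trans ((hmem t).mp htS)
      have hs : 0 ≤ Real.sin (t / 2) :=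
        Real.sin_nonneg_of_nonneg_of_le_pi (by linarith) (by linarith)
      have hsin_le : Real.sin (t / 2) ≤ h ^ (1 / θ) := by
        have h2 := Real.rpow_le_rpow (Real.rpow_nonneg hs θ) hsh (by positivity : (0:ℝ) ≤ 1 / θ)
        rwa [← Real.rpow_mul hs, mul_one_div_cancel h0.ne', Real.rpow_one] at h2
      by_cases hcase : t ≤ π
      · left
        have hj := Real.mul_le_sin (by linarith : (0:ℝ) ≤ t / 2) (by linarith)
        have : 2 / π * (t / 2) ≤ h ^ (1 / θ) := hj.trans hsin_le
        constructor
        · exact ht0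
        · rw [ha_def]; rw [div_mul_eq_mul_div, div_le_iff₀ hpi] at this; nlinarith
      · right
        push_neg at hcase
        have heq : Real.sin (t / 2) = Real.sin (π - t / 2) := by rw [Real.sin_pi_sub]
        have hj := Real.mul_le_sin (by linarith : (0:ℝ) ≤ π - t / 2) (by linarith)
        have : 2 / π * (π - t / 2) ≤ h ^ (1 / θ) := by
          rw [← heq] at hj; exact hj.trans hsin_le
        constructor
        · rw [ha_def]; rw [div_mul_eq_mul_div, div_le_iff₀ hpi] at this; nlinarith
        · exact ht2.le
    calc lensPullback θ S
        = (ENNReal.ofReal (2 * π))⁻¹ * volume (f ⁻¹' S ∩ Set.Ico 0 (2 * π)) := hmap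
      _ ≤ (ENNReal.ofReal (2 * π))⁻¹ *
            volume (Set.Icc 0 a ∪ Set.Icc (2 * π - a) (2 * π)) :=
          mul_le_mul_right (measure_mono hsub) _
      _ ≤ (ENNReal.ofReal (2 * π))⁻¹ * (ENNReal.ofReal a + ENNReal.ofReal a) := by
          refine mul_le_mul_right ((measure_union_le _ _).trans ?_) _
          rw [Real.volume_Icc, Real.volume_Icc, sub_zero]
          apply add_le_add_right
          exact ENNReal.ofReal_le_ofReal (by linarith)
      _ = (ENNReal.ofReal (2 * π))⁻¹ * (ENNReal.ofReal (2 * π) *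
            ENNReal.ofReal (h ^ (1 / θ))) := by
          rw [← ENNReal.ofReal_add ha0 ha0, ← ENNReal.ofReal_mul (by positivity)]
          congr 1
          rw [ha_def]; ring
      _ = ENNReal.ofReal (h ^ (1 / θ)) := by
          rw [← mul_assoc, ENNReal.inv_mul_cancel (ENNReal.ofReal_pos.mpr (by positivity)).ne'
            ENNReal.ofReal_ne_top, one_mul]
      _ = ENNReal.ofReal (1 * h ^ (1 / θ)) := by rw [one_mul]
end

section
/- Let θ ∈ (0, 1/2). Then the integral ∫_0^{2π} (1 − |λ_θ(e^{it})|²)^{−2} dt is finite. -/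
open MeasureTheory

open Real

set_option maxHeartbeats 1000000

lemma lens_key (θ : ℝ) (hθ0 : 0 < θ) (hθ2 : θ < 1/2) (t : ℝ) (ht : Real.sin t ≠ 0) :
    Real.cos (θ * Real.pi) * |Real.sin t| ^ θ / 4 ≤
      1 - ‖lensMap θ (Complex.exp (Complex.I * t))‖ ^ 2 := by
  have hpi := Real.pi_pos
  set z : ℂ := Complex.exp (Complex.I * t) with hz
  have hzt : Complex.I * (t : ℂ) = (t : ℂ) * Complex.I := mul_comm _ _
  have hre : z.re = Real.cos t := by rw [hz, hzt]; exact Complex.exp_ofReal_mul_I_re t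
  have him : z.im = Real.sin t := by rw [hz, hzt]; exact Complex.exp_ofReal_mul_I_im t
  set u : ℂ := 1 + z with hu
  set v : ℂ := 1 - z with hv
  have huim : u.im = Real.sin t := by simp [hu, him]
  have hvim : v.im = -Real.sin t := by simp [hv, him]
  have hu0 : u ≠ 0 := fun h => ht (by simpa [h] using huim.symm)
  have hv0 : v ≠ 0 := fun h => ht (by simpa [h] using neg_eq_zero.mp (by simpa [h] using hvim.symm))
  have hure : 0 ≤ u.re := by simp [hu, hre]; linarith [Real.neg_one_le_cos t]
  have hvre : 0 ≤ v.re := by simp [hv, hre]; linarith [Real.cos_le_one t]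
  have hargu : |u.arg| ≤ π / 2 := Complex.abs_arg_le_pi_div_two_iff.2 hure
  have hargv : |v.arg| ≤ π / 2 := Complex.abs_arg_le_pi_div_two_iff.2 hvre
  set a : ℂ := u ^ (θ : ℂ) with ha
  set b : ℂ := v ^ (θ : ℂ) with hb
  set w : ℂ := (Complex.log u + (starRingEnd ℂ) (Complex.log v)) * (θ : ℂ) with hw
  have hab : a * (starRingEnd ℂ) b = Complex.exp w := by
    rw [ha, hb, Complex.cpow_def_of_ne_zero hu0, Complex.cpow_def_of_ne_zero hv0,
      ← Complex.exp_conj, hw, add_mul]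
    rw [← Complex.exp_add]
    congr 1
    rw [map_mul, Complex.conj_ofReal]
  have hwre : w.re = (Real.log ‖u‖ + Real.log ‖v‖) * θ := by
    simp [hw, Complex.mul_re, Complex.add_re, Complex.log_re]
  have hwim : w.im = (u.arg - v.arg) * θ := by
    simp [hw, Complex.mul_im, Complex.add_im, Complex.log_im, Complex.log_re, sub_eq_add_neg]
  have habs_uv : ‖u‖ * ‖v‖ = 2 * |Real.sin t| := by
    have h1 : ‖u‖ * ‖v‖ = ‖u * v‖ := (norm_mul _ _).symm
    have h2 : u * v = 1 - z ^ 2 := by ring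
    have h3 : (‖1 - z ^ 2‖) ^ 2 = (2 * |Real.sin t|) ^ 2 := by
      rw [Complex.sq_norm, Complex.normSq_apply]
      have hre2 : (1 - z ^ 2).re = 1 - (Real.cos t ^ 2 - Real.sin t ^ 2) := by
        simp only [pow_two, Complex.sub_re, Complex.mul_re, Complex.one_re, hre, him]
      have him2 : (1 - z ^ 2).im = -(2 * Real.sin t * Real.cos t) := by
        simp only [pow_two, Complex.sub_im, Complex.mul_im, Complex.one_im, hre, him]; ring
      rw [hre2, him2]
      have hpyth := Real.sin_sq_add_cos_sq t
      have habs2 : |Real.sin t| ^ 2 = Real.sin t ^ 2 := sq_abs _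
      nlinarith
    have h4 : (0:ℝ) ≤ 2 * |Real.sin t| := by positivity
    rw [h1, h2]
    nlinarith [norm_nonneg (1 - z ^ 2), sq_nonneg (‖1 - z^2‖ - 2 * |Real.sin t|)]
  have hexp_re : Real.exp w.re = (2 * |Real.sin t|) ^ θ := by
    rw [hwre, ← Real.log_mul (norm_pos_iff.mpr hu0).ne' (norm_pos_iff.mpr hv0).ne', habs_uv,
      Real.rpow_def_of_pos (by positivity)]
  have hcosw : Real.cos (θ * π) ≤ Real.cos w.im := by
    have h1 : |w.im| ≤ θ * π := by
      rw [hwim, abs_mul, abs_of_pos hθ0, mul_comm]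
      have : |u.arg - v.arg| ≤ π := by
        calc |u.arg - v.arg| ≤ |u.arg| + |v.arg| := abs_sub _ _
          _ ≤ π := by linarith
      exact mul_le_mul_of_nonneg_left this hθ0.le
    rw [← Real.cos_abs w.im]
    exact Real.cos_le_cos_of_nonneg_of_le_pi (abs_nonneg _) (by nlinarith) h1
  have hcospos : 0 < Real.cos (θ * π) := by
    apply Real.cos_pos_of_mem_Ioo
    constructor <;> nlinarith
  have hre_ab : Real.cos (θ * π) * |Real.sin t| ^ θ ≤ (a * (starRingEnd ℂ) b).re := by
    rw [hab, Complex.exp_re, hexp_re]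
    have h1 : |Real.sin t| ^ θ ≤ (2 * |Real.sin t|) ^ θ := by
      apply Real.rpow_le_rpow (abs_nonneg _) _ hθ0.le
      nlinarith [abs_nonneg (Real.sin t)]
    calc Real.cos (θ * π) * |Real.sin t| ^ θ ≤ Real.cos w.im * (2*|Real.sin t|) ^ θ := by
          apply mul_le_mul hcosw h1 (by positivity) (le_trans hcospos.le hcosw)
      _ = (2*|Real.sin t|) ^ θ * Real.cos w.im := mul_comm _ _
  have hrepos : 0 < (a * (starRingEnd ℂ) b).re := lt_of_lt_of_le (by
    have : (0:ℝ) < |Real.sin t| ^ θ := Real.rpow_pos_of_pos (abs_pos.2 ht) θ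
    positivity) hre_ab
  have habs_a : ‖a‖ ≤ 2 := by
    rw [ha, Complex.norm_cpow_real]
    calc ‖u‖ ^ θ ≤ (2:ℝ) ^ θ := by
          apply Real.rpow_le_rpow (norm_nonneg _) _ hθ0.le
          calc ‖u‖ = ‖(1:ℂ) + z‖ := rfl
            _ ≤ ‖(1:ℂ)‖ + ‖z‖ := norm_add_le _ _
            _ ≤ 2 := by
                rw [norm_one, hz, hzt, Complex.norm_exp_ofReal_mul_I]
                norm_num
      _ ≤ (2:ℝ) ^ (1:ℝ) := Real.rpow_le_rpow_of_exponent_le one_le_two (by linarith)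
      _ = 2 := Real.rpow_one 2
  have habs_b : ‖b‖ ≤ 2 := by
    rw [hb, Complex.norm_cpow_real]
    calc ‖v‖ ^ θ ≤ (2:ℝ) ^ θ := by
          apply Real.rpow_le_rpow (norm_nonneg _) _ hθ0.le
          calc ‖v‖ = ‖(1:ℂ) - z‖ := rfl
            _ ≤ ‖(1:ℂ)‖ + ‖z‖ := norm_sub_le _ _
            _ ≤ 2 := by
                rw [norm_one, hz, hzt, Complex.norm_exp_ofReal_mul_I]
                norm_num
      _ ≤ (2:ℝ) ^ (1:ℝ) := Real.rpow_le_rpow_of_exponent_le one_le_two (by linarith)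
      _ = 2 := Real.rpow_one 2
  have hns_add : Complex.normSq (a + b) =
      Complex.normSq a + Complex.normSq b + 2 * (a * (starRingEnd ℂ) b).re :=
    Complex.normSq_add a b
  have hns_sub : Complex.normSq (a - b) =
      Complex.normSq a + Complex.normSq b - 2 * (a * (starRingEnd ℂ) b).re :=
    Complex.normSq_sub a b
  have hns_pos : 0 < Complex.normSq (a + b) := by
    rw [hns_add]
    have := Complex.normSq_nonneg a
    have := Complex.normSq_nonneg b
    linarith
  have hab0 : a + b ≠ 0 := fun h => by simp [h] at hns_pos
  have hns_le : Complex.normSq (a + b) ≤ 16 := by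
    rw [hns_add]
    have hna : Complex.normSq a ≤ 4 := by
      rw [← Complex.sq_norm]; nlinarith [norm_nonneg a]
    have hnb : Complex.normSq b ≤ 4 := by
      rw [← Complex.sq_norm]; nlinarith [norm_nonneg b]
    have hre_le : (a * (starRingEnd ℂ) b).re ≤ 4 := by
      calc (a * (starRingEnd ℂ) b).re ≤ ‖a * (starRingEnd ℂ) b‖ := Complex.re_le_norm _
        _ = ‖a‖ * ‖b‖ := by rw [norm_mul, Complex.norm_conj]
        _ ≤ 4 := by nlinarith [norm_nonneg a, norm_nonneg b]
    linarith
  have hlens : ‖lensMap θ z‖ ^ 2 =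
      Complex.normSq (a - b) / Complex.normSq (a + b) := by
    rw [lensMap, norm_div, div_pow, Complex.sq_norm, Complex.sq_norm, ha, hb]
  rw [hlens]
  have h1 : Complex.normSq (a+b) - Complex.normSq (a-b) = 4 * (a * (starRingEnd ℂ) b).re := by
    rw [hns_add, hns_sub]; ring
  have h2 : 1 - Complex.normSq (a-b)/Complex.normSq (a+b)
      = (Complex.normSq (a+b) - Complex.normSq (a-b))/Complex.normSq (a+b) := by
    field_simp
  rw [h2, h1, div_le_div_iff₀ (by norm_num) hns_pos]
  have hnn : 0 ≤ Real.cos (θ * π) * |Real.sin t| ^ θ := by positivity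
  nlinarith [hre_ab, hns_le, hns_pos, hrepos, hnn]

lemma int_left {r : ℝ} (hr : -1 < r) {a b : ℝ} (hab : a ≤ b) :
    IntegrableOn (fun t : ℝ => (t - a) ^ r) (Set.Ioc a b) volume := by
  have h := (intervalIntegral.intervalIntegrable_rpow' (a := 0) (b := b - a) hr).comp_sub_right a
  simp only [zero_add, sub_add_cancel] at h
  rwa [intervalIntegrable_iff_integrableOn_Ioc_of_le hab] at h

lemma int_right {r : ℝ} (hr : -1 < r) {a b : ℝ} (hab : a ≤ b) :
    IntegrableOn (fun t : ℝ => (b - t) ^ r) (Set.Ioc a b) volume := by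
  have h := (intervalIntegral.intervalIntegrable_rpow' (a := 0) (b := b - a) hr).comp_sub_left b
  simp only [sub_zero, sub_sub_cancel] at h
  have h2 := h.symm
  rwa [intervalIntegrable_iff_integrableOn_Ioc_of_le hab] at h2

lemma lens_meas (θ : ℝ) : Measurable (fun t : ℝ =>
    ((1 - ‖lensMap θ (Complex.exp (Complex.I * t))‖ ^ 2) ^ 2)⁻¹) := by
  have hz : Measurable fun t : ℝ => Complex.exp (Complex.I * t) :=
    (Complex.continuous_exp.comp (continuous_const.mul Complex.continuous_ofReal)).measurable
  have hl : Measurable fun t : ℝ => lensMap θ (Complex.exp (Complex.I * t)) := by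
    unfold lensMap
    exact (((measurable_const.add hz).pow measurable_const).sub
        ((measurable_const.sub hz).pow measurable_const)).div
      (((measurable_const.add hz).pow measurable_const).add
        ((measurable_const.sub hz).pow measurable_const))
  exact ((measurable_const.sub ((continuous_norm.measurable.comp hl).pow measurable_const)).pow
    measurable_const).inv

lemma lens_bound (θ : ℝ) (hθ0 : 0 < θ) (hθ2 : θ < 1/2) {t s : ℝ} (hs : 0 < s)
    (h : 2 / Real.pi * s ≤ |Real.sin t|) :
    ‖((1 - ‖lensMap θ (Complex.exp (Complex.I * t))‖ ^ 2) ^ 2)⁻¹‖ ≤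
      ((Real.cos (θ * Real.pi) / 4) ^ 2)⁻¹ * (2 / Real.pi) ^ (-(2*θ)) * s ^ (-(2*θ)) := by
  have hpi := Real.pi_pos
  have hsin : 0 < |Real.sin t| := lt_of_lt_of_le (by positivity) h
  have ht : Real.sin t ≠ 0 := by simpa [abs_pos] using hsin
  have hkey := lens_key θ hθ0 hθ2 t ht
  have hcos : 0 < Real.cos (θ * Real.pi) := by
    apply Real.cos_pos_of_mem_Ioo
    constructor <;> nlinarith
  set A : ℝ := ‖lensMap θ (Complex.exp (Complex.I * t))‖ with hA
  set c : ℝ := Real.cos (θ * Real.pi) / 4 with hc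
  set m : ℝ := |Real.sin t| with hm
  have hc0 : 0 < c := by positivity
  have hmθ : 0 < m ^ θ := Real.rpow_pos_of_pos hsin θ
  have hkey' : c * m ^ θ ≤ 1 - A ^ 2 := by
    rw [hc]; calc Real.cos (θ * Real.pi) / 4 * m ^ θ
        = Real.cos (θ * Real.pi) * m ^ θ / 4 := by ring
      _ ≤ 1 - A ^ 2 := hkey
  have h2 : (c * m ^ θ) ^ 2 ≤ (1 - A ^ 2) ^ 2 := by
    apply pow_le_pow_left₀ (by positivity) hkey'
  have h3 : ‖((1 - A ^ 2) ^ 2)⁻¹‖ ≤ ((c * m ^ θ) ^ 2)⁻¹ := by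
    rw [Real.norm_of_nonneg (by positivity)]
    exact inv_anti₀ (by positivity) h2
  have h4 : ((c * m ^ θ) ^ 2)⁻¹ = (c ^ 2)⁻¹ * m ^ (-(2*θ)) := by
    have he : (c * m ^ θ) ^ 2 = c ^ 2 * m ^ (2*θ) := by
      rw [mul_pow, ← Real.rpow_natCast (m ^ θ) 2, ← Real.rpow_mul (abs_nonneg _)]
      norm_num [mul_comm]
      exact Or.inl rfl
    rw [he, mul_inv, ← Real.rpow_neg (abs_nonneg _)]
  have h5 : m ^ (-(2*θ)) ≤ (2 / Real.pi * s) ^ (-(2*θ)) :=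
    Real.rpow_le_rpow_of_nonpos (by positivity) h (by linarith)
  have h6 : (2 / Real.pi * s) ^ (-(2*θ)) = (2 / Real.pi) ^ (-(2*θ)) * s ^ (-(2*θ)) :=
    Real.mul_rpow (by positivity) hs.le
  calc ‖((1 - A ^ 2) ^ 2)⁻¹‖ ≤ ((c * m ^ θ) ^ 2)⁻¹ := h3
    _ = (c ^ 2)⁻¹ * m ^ (-(2*θ)) := h4
    _ ≤ (c ^ 2)⁻¹ * ((2 / Real.pi) ^ (-(2*θ)) * s ^ (-(2*θ))) := by
        rw [← h6]; exact mul_le_mul_of_nonneg_left h5 (by positivity)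
    _ = (c ^ 2)⁻¹ * (2 / Real.pi) ^ (-(2*θ)) * s ^ (-(2*θ)) := by ring

lemma lens_piece (θ : ℝ) (hθ0 : 0 < θ) (hθ2 : θ < 1/2) {a b : ℝ} {d : ℝ → ℝ}
    (hd : IntegrableOn (fun t => d t ^ (-(2*θ))) (Set.Ioo a b) volume)
    (hdt : ∀ t ∈ Set.Ioo a b, 0 < d t ∧ 2 / Real.pi * d t ≤ |Real.sin t|) :
    IntegrableOn
      (fun t : ℝ => ((1 - ‖lensMap θ (Complex.exp (Complex.I * t))‖ ^ 2) ^ 2)⁻¹)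
      (Set.Ioo a b) volume := by
  apply Integrable.mono' (hd.const_mul
      (((Real.cos (θ * Real.pi) / 4) ^ 2)⁻¹ * (2 / Real.pi) ^ (-(2*θ))))
    (lens_meas θ).aestronglyMeasurable.restrict
  rw [ae_restrict_iff' measurableSet_Ioo]
  apply Filter.Eventually.of_forall
  intro t htm
  obtain ⟨h1, h2⟩ := hdt t htm
  simpa [mul_assoc] using lens_bound θ hθ0 hθ2 h1 h2

/-- For `θ ∈ (0, 1/2)`, the integral
`∫_0^{2π} (1 - |λ_θ(e^{it})|²)^{-2} dt` is finite, i.e. the function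
`t ↦ (1 - |λ_θ(e^{it})|²)⁻²` is integrable on `(0, 2π)`. -/
theorem integrable_inv_sq_one_sub_abs_lensMap (θ : ℝ) (hθ : θ ∈ Set.Ioo (0 : ℝ) (1 / 2)) :
    IntegrableOn
      (fun t : ℝ => ((1 - ‖lensMap θ (Complex.exp (Complex.I * t))‖ ^ 2) ^ 2)⁻¹)
      (Set.Ioc 0 (2 * Real.pi)) volume := by
  obtain ⟨hθ0, hθ2⟩ := hθ
  have hpi := Real.pi_pos
  have hr : (-1:ℝ) < -(2*θ) := by linarith
  have e1 : Set.Ioc (0:ℝ) (π/2) ∪ Set.Ioc (π/2) π = Set.Ioc 0 π :=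
    Set.Ioc_union_Ioc_eq_Ioc (by positivity) (by linarith)
  have e2 : Set.Ioc (π:ℝ) (3*π/2) ∪ Set.Ioc (3*π/2) (2*π) = Set.Ioc π (2*π) :=
    Set.Ioc_union_Ioc_eq_Ioc (by linarith) (by linarith)
  have e3 : Set.Ioc (0:ℝ) π ∪ Set.Ioc π (2*π) = Set.Ioc 0 (2*π) :=
    Set.Ioc_union_Ioc_eq_Ioc (by linarith) (by linarith)
  rw [← e3, ← e1, ← e2]
  have p1 : IntegrableOn (fun t : ℝ => ((1 - ‖lensMap θ (Complex.exp (Complex.I * t))‖ ^ 2) ^ 2)⁻¹) (Set.Ioc (0:ℝ) (π/2)) volume := by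
    rw [integrableOn_Ioc_iff_integrableOn_Ioo]
    apply lens_piece θ hθ0 hθ2 (d := fun t => t)
    · have := (int_left hr (a := (0:ℝ)) (b := π/2) (by positivity)).mono_set
        Set.Ioo_subset_Ioc_self
      simpa using this
    · intro t ht
      refine ⟨ht.1, le_trans (Real.mul_le_sin ht.1.le ht.2.le) (le_abs_self _)⟩
  have p2 : IntegrableOn (fun t : ℝ => ((1 - ‖lensMap θ (Complex.exp (Complex.I * t))‖ ^ 2) ^ 2)⁻¹) (Set.Ioc (π/2:ℝ) π) volume := by
    rw [integrableOn_Ioc_iff_integrableOn_Ioo]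
    apply lens_piece θ hθ0 hθ2 (d := fun t => π - t)
    · exact (int_right hr (a := (π/2:ℝ)) (b := π) (by linarith)).mono_set
        Set.Ioo_subset_Ioc_self
    · intro t ht
      refine ⟨by linarith [ht.2], ?_⟩
      calc 2/π * (π - t) ≤ Real.sin (π - t) :=
            Real.mul_le_sin (by linarith [ht.2]) (by linarith [ht.1])
        _ = Real.sin t := Real.sin_pi_sub t
        _ ≤ |Real.sin t| := le_abs_self _
  have p3 : IntegrableOn (fun t : ℝ => ((1 - ‖lensMap θ (Complex.exp (Complex.I * t))‖ ^ 2) ^ 2)⁻¹) (Set.Ioc (π:ℝ) (3*π/2)) volume := by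
    rw [integrableOn_Ioc_iff_integrableOn_Ioo]
    apply lens_piece θ hθ0 hθ2 (d := fun t => t - π)
    · exact (int_left hr (a := (π:ℝ)) (b := 3*π/2) (by linarith)).mono_set
        Set.Ioo_subset_Ioc_self
    · intro t ht
      refine ⟨by linarith [ht.1], ?_⟩
      calc 2/π * (t - π) ≤ Real.sin (t - π) :=
            Real.mul_le_sin (by linarith [ht.1]) (by linarith [ht.2])
        _ = -Real.sin t := Real.sin_sub_pi t
        _ ≤ |Real.sin t| := neg_le_abs _
  have p4 : IntegrableOn (fun t : ℝ => ((1 - ‖lensMap θ (Complex.exp (Complex.I * t))‖ ^ 2) ^ 2)⁻¹) (Set.Ioc (3*π/2:ℝ) (2*π)) volume := by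
    rw [integrableOn_Ioc_iff_integrableOn_Ioo]
    apply lens_piece θ hθ0 hθ2 (d := fun t => 2*π - t)
    · exact (int_right hr (a := (3*π/2:ℝ)) (b := 2*π) (by linarith)).mono_set
        Set.Ioo_subset_Ioc_self
    · intro t ht
      refine ⟨by linarith [ht.2], ?_⟩
      calc 2/π * (2*π - t) ≤ Real.sin (2*π - t) :=
            Real.mul_le_sin (by linarith [ht.2]) (by linarith [ht.1])
        _ = -Real.sin t := by
            rw [show 2*π - t = -(t - 2*π) by ring, Real.sin_neg, Real.sin_sub_two_pi]
        _ ≤ |Real.sin t| := neg_le_abs _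
  exact ((p1.union p2).union (p3.union p4))
end

section
/- Let m ≥ 1. There is a constant M_m > 0, depending only on m, with the following property: for every family (b_α) of complex numbers indexed by multi-indices α ∈ ℕ^m with Σ_α |b_α|² ≤ 1, every integer l ≥ 1, and every z ∈ D^m (the open unit polydisk), the tail of the power series satisfies |Σ_{|α| > l} b_α z^α| ≤ M_m · l^{m/2} · |z|_∞^l / (1 − |z|_∞²)^{(m+1)/2}, where |z|_∞ = max_{1 ≤ j ≤ m} |z_j| and |α| = α₁ + ⋯ + α_m. -/
set_option maxHeartbeats 1000000


/-- Full geometric sum over multi-indices. -/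
lemma pi_geom_summable (m : ℕ) {u : ℝ} (h0 : 0 ≤ u) (h1 : u < 1) :
    Summable (fun α : Fin m → ℕ => u ^ (∑ i, α i)) ∧
      (∑' α : Fin m → ℕ, u ^ (∑ i, α i)) = (1 - u)⁻¹ ^ m := by
  induction m with
  | zero =>
    haveI : Unique (Fin 0 → ℕ) := ⟨⟨fun _ => 0⟩, fun f => funext fun i => i.elim0⟩
    constructor
    · exact Summable.of_finite
    · simp [tsum_eq_single (default : Fin 0 → ℕ)
        (fun b hb => absurd (Subsingleton.elim b default) hb)]
  | succ n ih =>
    have hgeo : Summable (fun k : ℕ => u ^ k) := summable_geometric_of_lt_one h0 h1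
    have hprod : Summable (fun p : ℕ × (Fin n → ℕ) => u ^ p.1 * u ^ (∑ i, p.2 i)) :=
      Summable.mul_of_nonneg (f := fun k : ℕ => u ^ k)
        (g := fun α : Fin n → ℕ => u ^ (∑ i, α i)) hgeo ih.1
        (fun k => pow_nonneg h0 k) (fun α => pow_nonneg h0 _)
    set e : (ℕ × (Fin n → ℕ)) ≃ (Fin (n+1) → ℕ) := Fin.consEquiv (fun _ => ℕ) with he
    have hcomp : ∀ p : ℕ × (Fin n → ℕ),
        (fun α : Fin (n+1) → ℕ => u ^ (∑ i, α i)) (e p) = u ^ p.1 * u ^ (∑ i, p.2 i) := by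
      intro p
      simp only [he, Fin.consEquiv, Equiv.coe_fn_mk, Fin.sum_cons, pow_add]
    have hsum : Summable (fun α : Fin (n+1) → ℕ => u ^ (∑ i, α i)) := by
      rw [← Equiv.summable_iff e]
      exact hprod.congr (fun p => (hcomp p).symm)
    refine ⟨hsum, ?_⟩
    have hinner : ∀ a : ℕ, Summable (fun c : Fin n → ℕ => u ^ (a, c).1 * u ^ ∑ i, (a, c).2 i) :=
      fun a => Summable.mul_left (f := fun α : Fin n → ℕ => u ^ (∑ i, α i)) (u ^ a) ih.1
    rw [← Equiv.tsum_eq e, tsum_congr hcomp,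
      Summable.tsum_prod' (hprod.congr (fun p => rfl)) hinner]
    simp_rw [tsum_mul_left, ih.2, tsum_mul_right, tsum_geometric_of_lt_one h0 h1,
      pow_succ, mul_comm]

/-- Tail bound for the geometric multi-index sum. -/
lemma pi_geom_tail (m l : ℕ) (hl : 1 ≤ l) {s : ℝ} (h0 : 0 ≤ s) (h1 : s < 1) :
    (∑' α : {a : Fin m → ℕ // l < ∑ i, a i}, s ^ (∑ i, (α : Fin m → ℕ) i))
      ≤ 2 * 2 ^ m * l ^ m * s ^ l / (1 - s) ^ (m + 1) := by
  obtain ⟨u, hu⟩ : ∃ u : ℝ, u = 1 - (1 - s) / (2 * l) := ⟨_, rfl⟩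
  have hl' : (1 : ℝ) ≤ (l : ℝ) := by exact_mod_cast hl
  have h2l : (1 : ℝ) ≤ 2 * l := by linarith
  have hs1 : 0 < 1 - s := by linarith
  have hu_lt : u < 1 := by
    have : 0 < (1 - s) / (2 * l) := div_pos hs1 (by linarith)
    linarith [this, hu.le, hu.ge]
  have hsu : s ≤ u := by
    rw [hu]
    have : (1 - s) / (2 * l) ≤ 1 - s := by
      rw [div_le_iff₀ (by linarith : (0:ℝ) < 2 * l)]
      nlinarith
    linarith
  have hu0 : 0 ≤ u := le_trans h0 hsu
  have h1u : 1 - u = (1 - s) / (2 * l) := by rw [hu]; ring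
  -- Bernoulli: u ^ l ≥ 1/2
  have hul : (1:ℝ)/2 ≤ u ^ l := by
    have hb := one_add_mul_le_pow (a := -((1 - s) / (2 * l))) (by
      have : (1 - s) / (2 * l) ≤ 1 := by
        rw [div_le_one (by linarith : (0:ℝ) < 2 * l)]; linarith
      linarith) l
    have : 1 + (l : ℝ) * (-((1 - s) / (2 * l))) = 1 - (1 - s)/2 := by
      field_simp; ring
    calc (1:ℝ)/2 ≤ 1 - (1 - s)/2 := by linarith
      _ = 1 + (l : ℝ) * (-((1 - s) / (2 * l))) := this.symm
      _ ≤ (1 + -((1 - s) / (2 * l))) ^ l := hb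
      _ = u ^ l := by rw [hu]; ring_nf
  have hul0 : 0 < u ^ l := lt_of_lt_of_le (by norm_num) hul
  obtain ⟨c, hc⟩ : ∃ c : ℝ, c = s ^ l / u ^ l := ⟨_, rfl⟩
  -- pointwise bound on the tail
  have hpt : ∀ α : {a : Fin m → ℕ // l < ∑ i, a i},
      s ^ (∑ i, (α : Fin m → ℕ) i) ≤ c * u ^ (∑ i, (α : Fin m → ℕ) i) := by
    rintro ⟨a, ha⟩
    obtain ⟨k, hk⟩ : ∃ k, ∑ i, a i = l + k := ⟨∑ i, a i - l, by omega⟩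
    simp only [hk, pow_add, hc]
    rw [div_mul_eq_mul_div, le_div_iff₀ hul0]
    have h1 : s ^ k ≤ u ^ k := pow_le_pow_left₀ h0 hsu k
    have h2 : (0:ℝ) ≤ s ^ l := pow_nonneg h0 l
    calc s ^ l * s ^ k * u ^ l = s ^ l * u ^ l * s ^ k := by ring
      _ ≤ s ^ l * u ^ l * u ^ k := by
          apply mul_le_mul_of_nonneg_left h1
          exact mul_nonneg h2 (le_of_lt hul0)
      _ = s ^ l * (u ^ l * u ^ k) := by ring
  have hfull := pi_geom_summable m hu0 hu_lt
  have hsub : Summable (fun α : {a : Fin m → ℕ // l < ∑ i, a i} =>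
      u ^ (∑ i, (α : Fin m → ℕ) i)) := hfull.1.subtype _
  have hssub : Summable (fun α : {a : Fin m → ℕ // l < ∑ i, a i} =>
      s ^ (∑ i, (α : Fin m → ℕ) i)) :=
    Summable.of_nonneg_of_le (fun α => pow_nonneg h0 _)
      (fun α => le_trans (hpt α) (le_of_eq rfl) |>.trans (le_of_eq rfl)) ((hsub.mul_left c).congr (fun _ => rfl)) |>.congr (fun _ => rfl)
  have step1 : (∑' α : {a : Fin m → ℕ // l < ∑ i, a i}, s ^ (∑ i, (α : Fin m → ℕ) i))
      ≤ c * (∑' α : {a : Fin m → ℕ // l < ∑ i, a i}, u ^ (∑ i, (α : Fin m → ℕ) i)) := by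
    rw [← tsum_mul_left]
    exact Summable.tsum_le_tsum hpt hssub (hsub.mul_left c)
  have step2 : (∑' α : {a : Fin m → ℕ // l < ∑ i, a i}, u ^ (∑ i, (α : Fin m → ℕ) i))
      ≤ (1 - u)⁻¹ ^ m := by
    rw [← hfull.2]
    exact Summable.tsum_subtype_le (fun α : Fin m → ℕ => u ^ (∑ i, α i)) _
      (fun α => pow_nonneg hu0 _) hfull.1
  have hc_le : c ≤ 2 * s ^ l := by
    rw [hc, div_le_iff₀ hul0]
    calc s ^ l = s ^ l * 1 := (mul_one _).symm
      _ ≤ 2 * s ^ l * u ^ l := by nlinarith [pow_nonneg h0 l]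
  have hinv : (1 - u)⁻¹ = 2 * l / (1 - s) := by
    rw [h1u]; rw [inv_div]
  have hnn : (0:ℝ) ≤ (1 - u)⁻¹ ^ m := pow_nonneg (inv_nonneg.mpr (by linarith)) m
  calc (∑' α : {a : Fin m → ℕ // l < ∑ i, a i}, s ^ (∑ i, (α : Fin m → ℕ) i))
      ≤ c * (1 - u)⁻¹ ^ m := le_trans step1 (by
        apply mul_le_mul_of_nonneg_left step2
        rw [hc]; exact div_nonneg (pow_nonneg h0 l) (le_of_lt hul0))
    _ ≤ 2 * s ^ l * (1 - u)⁻¹ ^ m := mul_le_mul_of_nonneg_right hc_le hnn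
    _ = 2 * s ^ l * (2 * l / (1 - s)) ^ m := by rw [hinv]
    _ = 2 * 2 ^ m * l ^ m * s ^ l / (1 - s) ^ m := by
        rw [div_pow, mul_pow]
        field_simp
    _ ≤ 2 * 2 ^ m * l ^ m * s ^ l / (1 - s) ^ (m + 1) := by
        apply div_le_div_of_nonneg_left ?_ ?_ ?_
        · positivity
        · exact pow_pos hs1 (m+1)
        · calc (1 - s) ^ (m+1) = (1 - s) ^ m * (1 - s) := pow_succ _ _
            _ ≤ (1 - s) ^ m * 1 := by
                apply mul_le_mul_of_nonneg_left (by linarith) (pow_nonneg (by linarith) m)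
            _ = (1 - s) ^ m := mul_one _


/-- Cauchy--Schwarz for infinite sums of nonnegative reals. -/
lemma tsum_cauchy_schwarz {ι : Type*} {f g : ι → ℝ} (hf0 : ∀ i, 0 ≤ f i) (hg0 : ∀ i, 0 ≤ g i)
    (hf : Summable (fun i => f i ^ 2)) (hg : Summable (fun i => g i ^ 2)) :
    (∑' i, f i * g i) ≤ Real.sqrt (∑' i, f i ^ 2) * Real.sqrt (∑' i, g i ^ 2) := by
  have hfg : Summable (fun i => f i * g i) :=
    Summable.of_nonneg_of_le (fun i => mul_nonneg (hf0 i) (hg0 i))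
      (fun i => by nlinarith [sq_nonneg (f i - g i)]) ((hf.add hg).div_const 2)
  apply Summable.tsum_le_of_sum_le hfg
  intro t
  have h1 : (∑ i ∈ t, f i * g i) ^ 2 ≤ (∑ i ∈ t, f i ^ 2) * (∑ i ∈ t, g i ^ 2) :=
    Finset.sum_mul_sq_le_sq_mul_sq t f g
  have ha : 0 ≤ ∑ i ∈ t, f i * g i :=
    Finset.sum_nonneg (fun i _ => mul_nonneg (hf0 i) (hg0 i))
  calc (∑ i ∈ t, f i * g i)
      = Real.sqrt ((∑ i ∈ t, f i * g i) ^ 2) := (Real.sqrt_sq ha).symm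
    _ ≤ Real.sqrt ((∑ i ∈ t, f i ^ 2) * (∑ i ∈ t, g i ^ 2)) := Real.sqrt_le_sqrt h1
    _ = Real.sqrt (∑ i ∈ t, f i ^ 2) * Real.sqrt (∑ i ∈ t, g i ^ 2) :=
        Real.sqrt_mul (Finset.sum_nonneg (fun i _ => sq_nonneg (f i))) _
    _ ≤ Real.sqrt (∑' i, f i ^ 2) * Real.sqrt (∑' i, g i ^ 2) := by
        apply mul_le_mul
        · exact Real.sqrt_le_sqrt (Summable.sum_le_tsum t (fun i _ => sq_nonneg (f i)) hf)
        · exact Real.sqrt_le_sqrt (Summable.sum_le_tsum t (fun i _ => sq_nonneg (g i)) hg)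
        · exact Real.sqrt_nonneg _
        · exact Real.sqrt_nonneg _



/-- For every `m ≥ 1` there is `M_m > 0` such that for every family
`(b_α)_{α ∈ ℕ^m}` with `Σ_α |b_α|² ≤ 1`, every `l ≥ 1` and every `z` in the open
unit polydisk, the tail `Σ_{|α| > l} b_α z^α` satisfies
`|Σ_{|α| > l} b_α z^α| ≤ M_m l^{m/2} r^l / (1 - r²)^{(m+1)/2}` where
`r = |z|_∞ = max_j |z_j|`. -/
theorem polydisk_tail_estimate (m : ℕ) (hm : 1 ≤ m) :
    ∃ M : ℝ, 0 < M ∧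
      ∀ b : (Fin m → ℕ) → ℂ,
        Summable (fun α : Fin m → ℕ => ‖b α‖ ^ 2) →
        (∑' α : Fin m → ℕ, ‖b α‖ ^ 2) ≤ 1 →
        ∀ l : ℕ, 1 ≤ l →
        ∀ z : Fin m → ℂ, (∀ i, ‖z i‖ < 1) →
          ‖(∑' α : {a : Fin m → ℕ // l < ∑ i, a i},
              b α * ∏ i, z i ^ (α : Fin m → ℕ) i)‖ ≤
            M * (l : ℝ) ^ ((m : ℝ) / 2) * (⨆ i, ‖z i‖) ^ l /
              (1 - (⨆ i, ‖z i‖) ^ 2) ^ (((m : ℝ) + 1) / 2) := by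
  refine ⟨Real.sqrt (2 * 2 ^ m), Real.sqrt_pos.mpr (by positivity), ?_⟩
  intro b hb hb1 l hl z hz
  haveI : Nonempty (Fin m) := ⟨⟨0, hm⟩⟩
  set r : ℝ := ⨆ i, ‖z i‖ with hr
  have hbdd : BddAbove (Set.range fun i => ‖z i‖) :=
    (Set.finite_range _).bddAbove
  have hir : ∀ i, ‖z i‖ ≤ r := fun i => le_ciSup hbdd i
  have hr0 : 0 ≤ r := le_trans (norm_nonneg _) (hir ⟨0, hm⟩)
  have hr1 : r < 1 := by
    obtain ⟨i0, hmax⟩ := Finite.exists_max (fun i => ‖z i‖)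
    exact lt_of_le_of_lt (ciSup_le hmax) (hz i0)
  set s : ℝ := r ^ 2 with hs
  have h0s : 0 ≤ s := sq_nonneg r
  have h1s : s < 1 := by rw [hs]; nlinarith
  set A := {a : Fin m → ℕ // l < ∑ i, a i}
  set F : A → ℝ := fun α => ‖b α‖ with hF
  set G : A → ℝ := fun α => ‖∏ i, z i ^ (α : Fin m → ℕ) i‖ with hG
  -- key pointwise bound
  have hGle : ∀ α : A, G α ≤ r ^ (∑ i, (α : Fin m → ℕ) i) := by
    rintro ⟨a, ha⟩
    simp only [hG, norm_prod, norm_pow]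
    calc (∏ i, ‖z i‖ ^ a i) ≤ ∏ i, r ^ a i := by
          apply Finset.prod_le_prod
          · intro i _; positivity
          · intro i _; exact pow_le_pow_left₀ (norm_nonneg _) (hir i) _
      _ = r ^ (∑ i, a i) := by rw [Finset.prod_pow_eq_pow_sum]
  have hG0 : ∀ α : A, 0 ≤ G α := fun α => norm_nonneg _
  have hF0 : ∀ α : A, 0 ≤ F α := fun α => norm_nonneg _
  have hG2le : ∀ α : A, G α ^ 2 ≤ s ^ (∑ i, (α : Fin m → ℕ) i) := by
    intro α
    rw [hs, ← pow_mul, mul_comm 2, pow_mul]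
    exact pow_le_pow_left₀ (hG0 α) (hGle α) 2
  have hs_sub : Summable (fun α : A => s ^ (∑ i, (α : Fin m → ℕ) i)) :=
    (pi_geom_summable m h0s h1s).1.subtype _
  have hF2 : Summable (fun α : A => F α ^ 2) := hb.subtype _
  have hG2 : Summable (fun α : A => G α ^ 2) :=
    Summable.of_nonneg_of_le (fun α => sq_nonneg _) hG2le hs_sub
  have hnorm : Summable (fun α : A => F α * G α) :=
    Summable.of_nonneg_of_le (fun α => mul_nonneg (hF0 α) (hG0 α))
      (fun α => by nlinarith [sq_nonneg (F α - G α)]) ((hF2.add hG2).div_const 2)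
  -- step 1: modulus of sum ≤ sum of moduli
  have step1 : ‖(∑' α : A, b α * ∏ i, z i ^ (α : Fin m → ℕ) i)‖
      ≤ ∑' α : A, F α * G α := by
    have := norm_tsum_le_tsum_norm (f := fun α : A => b α * ∏ i, z i ^ (α : Fin m → ℕ) i)
      (by simpa only [norm_mul] using hnorm)
    simpa only [norm_mul] using this
  -- step 2: Cauchy-Schwarz
  have step2 : (∑' α : A, F α * G α)
      ≤ Real.sqrt (∑' α : A, F α ^ 2) * Real.sqrt (∑' α : A, G α ^ 2) :=
    tsum_cauchy_schwarz hF0 hG0 hF2 hG2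
  -- step 3: first factor ≤ 1
  have hF2le1 : (∑' α : A, F α ^ 2) ≤ 1 := by
    refine le_trans ?_ hb1
    exact Summable.tsum_subtype_le (fun α : Fin m → ℕ => ‖b α‖ ^ 2) _
      (fun α => sq_nonneg _) hb
  have step3 : Real.sqrt (∑' α : A, F α ^ 2) ≤ 1 := by
    rw [show (1:ℝ) = Real.sqrt 1 by simp]
    exact Real.sqrt_le_sqrt hF2le1
  -- step 4: second factor
  have hG2sum : (∑' α : A, G α ^ 2) ≤ 2 * 2 ^ m * l ^ m * s ^ l / (1 - s) ^ (m + 1) :=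
    le_trans (Summable.tsum_le_tsum hG2le hG2 hs_sub) (pi_geom_tail m l hl h0s h1s)
  have step4 : Real.sqrt (∑' α : A, G α ^ 2)
      ≤ Real.sqrt (2 * 2 ^ m * l ^ m * s ^ l / (1 - s) ^ (m + 1)) :=
    Real.sqrt_le_sqrt hG2sum
  -- step 5: compute the sqrt of the bound
  have hl0 : (0:ℝ) ≤ (l:ℝ) := Nat.cast_nonneg l
  have h1s0 : (0:ℝ) ≤ 1 - s := by linarith
  have step5 : Real.sqrt (2 * 2 ^ m * l ^ m * s ^ l / (1 - s) ^ (m + 1))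
      = Real.sqrt (2 * 2 ^ m) * (l : ℝ) ^ ((m : ℝ) / 2) * r ^ l
          / (1 - s) ^ (((m : ℝ) + 1) / 2) := by
    have e1 : Real.sqrt ((l:ℝ) ^ m) = (l : ℝ) ^ ((m : ℝ) / 2) := by
      rw [Real.sqrt_eq_rpow, ← Real.rpow_natCast (l:ℝ) m, ← Real.rpow_mul hl0]
      congr 1; ring
    have e2 : Real.sqrt (s ^ l) = r ^ l := by
      rw [hs, ← pow_mul, mul_comm 2, pow_mul, Real.sqrt_sq (by positivity)]
    have e3 : Real.sqrt ((1 - s) ^ (m + 1)) = (1 - s) ^ (((m : ℝ) + 1) / 2) := by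
      rw [Real.sqrt_eq_rpow, ← Real.rpow_natCast (1 - s) (m + 1), ← Real.rpow_mul h1s0]
      congr 1; push_cast; ring
    rw [Real.sqrt_div (by positivity), Real.sqrt_mul (by positivity),
      Real.sqrt_mul (by positivity), e1, e2, e3]
  calc ‖(∑' α : A, b α * ∏ i, z i ^ (α : Fin m → ℕ) i)‖
      ≤ ∑' α : A, F α * G α := step1
    _ ≤ Real.sqrt (∑' α : A, F α ^ 2) * Real.sqrt (∑' α : A, G α ^ 2) := step2
    _ ≤ 1 * Real.sqrt (2 * 2 ^ m * l ^ m * s ^ l / (1 - s) ^ (m + 1)) :=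
        mul_le_mul step3 step4 (Real.sqrt_nonneg _) (by norm_num)
    _ = Real.sqrt (2 * 2 ^ m) * (l : ℝ) ^ ((m : ℝ) / 2) * r ^ l
          / (1 - s) ^ (((m : ℝ) + 1) / 2) := by rw [one_mul, step5]
end
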